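/- arXiv:1911.01011 — 2 statements merged into one kernel-verified Lean document; each statement's English description precedes it below -/
import Mathlib

section
/- For every i∈I, every homogeneous y∈'𝔣 and every x∈'𝔣, one has (yθ_i, x) = α(|y|, i)(y, r_i(x))(θ_i, θ_i) and (θ_i y, x) = α(i, |y|)(θ_i, θ_i)(y, ᵢr(x)). -/
open scoped TensorProduct

noncomputable section

/-- A Cartan datum on `I`. -/
structure CartanDatum (I : Type) where
  c : I → I → ℤ
  symm : ∀ i j, c i j = c j i
  pos : ∀ i, 0 < c i i
  even : ∀ i, Even (c i i)
  dvd : ∀ i j, i ≠ j → c i i ∣ 2 * c i j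
  nonpos : ∀ i j, i ≠ j → 2 * c i j ≤ 0

namespace CartanDatum

variable {I : Type} (cd : CartanDatum I)

/-- `d i = (i·i)/2`. -/
def d (i : I) : ℤ := cd.c i i / 2

/-- `a i j = 2(i·j)/(i·i)`. -/
def a (i j : I) : ℤ := 2 * cd.c i j / cd.c i i

/-- Extension of the pairing to `ℕ[I] × ℕ[I]`. -/
def dotN (ν μ : I →₀ ℕ) : ℤ :=
  ν.sum fun i m => μ.sum fun j n => (m : ℤ) * (n : ℤ) * cd.c i j

end CartanDatum

/-- A multiplicative bilinear form `ℕ[I] × ℕ[I] → 𝔽`. -/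
structure MultForm (I 𝔽 : Type) [Field 𝔽] where
  f : (I →₀ ℕ) → (I →₀ ℕ) → 𝔽
  add_left : ∀ ν ν' μ, f (ν + ν') μ = f ν μ * f ν' μ
  add_right : ∀ μ ν ν', f μ (ν + ν') = f μ ν * f μ ν'
  ne_zero : ∀ ν μ, f ν μ ≠ 0

/-- The trivial multiplicative bilinear form, constantly `1`. -/
def trivMF (I 𝔽 : Type) [Field 𝔽] : MultForm I 𝔽 :=
  ⟨fun _ _ => 1, fun _ _ _ => by ring, fun _ _ _ => by ring, fun _ _ => one_ne_zero⟩

variable {I : Type}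

/-- The generator `i` of `ℕ[I]`. -/
def δN (i : I) : I →₀ ℕ := Finsupp.single i 1

/-- The model for the free algebra `'𝔣` on the `θ i`. -/
abbrev FA (𝔽 I : Type) [Field 𝔽] := MonoidAlgebra 𝔽 (FreeMonoid I)

/-- The generator `θ i` of `'𝔣`. -/
def θ (𝔽 : Type) [Field 𝔽] {I : Type} (i : I) : FA 𝔽 I :=
  MonoidAlgebra.of 𝔽 (FreeMonoid I) (FreeMonoid.of i)

/-- The `ℕ[I]`-degree of a word. -/
def wt [DecidableEq I] (w : FreeMonoid I) : I →₀ ℕ :=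
  Multiset.toFinsupp (↑(FreeMonoid.toList w))

/-- Homogeneity of degree `ν` in `'𝔣`. -/
def IsHomog {𝔽 : Type} [Field 𝔽] [DecidableEq I] (ν : I →₀ ℕ) (x : FA 𝔽 I) : Prop :=
  ∀ w ∈ Finsupp.support (x.coeff : FreeMonoid I →₀ 𝔽), wt w = ν

/-- The model for `'𝔣 ⊗ '𝔣` (basis: pairs of words). -/
abbrev TA (𝔽 I : Type) [Field 𝔽] := MonoidAlgebra 𝔽 (FreeMonoid I × FreeMonoid I)

/-- The tensor `x ⊗ y` in the model of `'𝔣 ⊗ '𝔣`. -/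
def tmul {𝔽 : Type} [Field 𝔽] (x y : FA 𝔽 I) : TA 𝔽 I :=
  MonoidAlgebra.ofCoeff <| Finsupp.sum (x.coeff : FreeMonoid I →₀ 𝔽) fun w a =>
    Finsupp.sum (y.coeff : FreeMonoid I →₀ 𝔽) fun u b =>
      (Finsupp.single (w, u) (a * b) : (FreeMonoid I × FreeMonoid I) →₀ 𝔽)

/-- The twisted multiplication on `'𝔣 ⊗ '𝔣`:
`(x₁⊗x₂)(y₁⊗y₂) = v^{-|y₁|·|x₂|} β(|x₂|,|y₁|) x₁y₁ ⊗ x₂y₂`. -/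
def tMul [DecidableEq I] {𝔽 : Type} [Field 𝔽] (cd : CartanDatum I) (v : 𝔽)
    (β : MultForm I 𝔽) (z z' : TA 𝔽 I) : TA 𝔽 I :=
  MonoidAlgebra.ofCoeff <| Finsupp.sum (z.coeff : (FreeMonoid I × FreeMonoid I) →₀ 𝔽) fun p a =>
    Finsupp.sum (z'.coeff : (FreeMonoid I × FreeMonoid I) →₀ 𝔽) fun q b =>
      (Finsupp.single (p.1 * q.1, p.2 * q.2)
        (a * b * v ^ (-(cd.dotN (wt q.1) (wt p.2))) * β.f (wt p.2) (wt q.1))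
        : (FreeMonoid I × FreeMonoid I) →₀ 𝔽)

/-- The bilinear form on `'𝔣 ⊗ '𝔣` induced by a form `B` on `'𝔣`:
`(x₁⊗x₂, y₁⊗y₂) = α(|x₁|,|x₂|) (x₁,y₁) (x₂,y₂)` for homogeneous `x₁, x₂`. -/
def pairT [DecidableEq I] {𝔽 : Type} [Field 𝔽] (α : MultForm I 𝔽)
    (B : FA 𝔽 I →ₗ[𝔽] FA 𝔽 I →ₗ[𝔽] 𝔽) (z z' : TA 𝔽 I) : 𝔽 :=
  Finsupp.sum (z.coeff : (FreeMonoid I × FreeMonoid I) →₀ 𝔽) fun p a =>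
    Finsupp.sum (z'.coeff : (FreeMonoid I × FreeMonoid I) →₀ 𝔽) fun q b =>
      a * b * α.f (wt p.1) (wt p.2)
        * B (MonoidAlgebra.single p.1 1) (MonoidAlgebra.single q.1 1)
        * B (MonoidAlgebra.single p.2 1) (MonoidAlgebra.single q.2 1)

/-- The quantum integer `[n]_c`. -/
def qnum {𝔽 : Type} [Field 𝔽] (c : 𝔽) (n : ℕ) : 𝔽 :=
  (c ^ (n : ℤ) - c ^ (-(n : ℤ))) / (c - c⁻¹)

/-- The quantum factorial `[n]_c!`. -/
def qfact {𝔽 : Type} [Field 𝔽] (c : 𝔽) (n : ℕ) : 𝔽 :=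
  ∏ k ∈ Finset.range n, qnum c (k + 1)

/-- The divided power `θ_i^{(n)} = θ_i^n / [n]_{v_i}!`. -/
def θdiv [DecidableEq I] {𝔽 : Type} [Field 𝔽] (cd : CartanDatum I) (v : 𝔽)
    (i : I) (n : ℕ) : FA 𝔽 I :=
  (qfact (v ^ cd.d i) n)⁻¹ • (θ 𝔽 i) ^ n

/-- The twisted quantum Serre element
`D_{ij} = Σ_{k+k'=1-a_{ij}} (-1)^k β(i,j)^{-k} θ_i^{(k)} θ_j θ_i^{(k')}`. -/
def Dij [DecidableEq I] {𝔽 : Type} [Field 𝔽] (cd : CartanDatum I) (v : 𝔽)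
    (g : I → I → 𝔽) (i j : I) : FA 𝔽 I :=
  ∑ k ∈ Finset.range ((1 - cd.a i j).toNat + 1),
    ((-1 : 𝔽) ^ k * ((g i j)⁻¹) ^ k) •
      (θdiv cd v i k * θ 𝔽 j * θdiv cd v i ((1 - cd.a i j).toNat - k))

end

------------------------------------------------------------------
-- auxiliary lemmas
------------------------------------------------------------------
noncomputable section AuxLemmas

variable {I : Type} [DecidableEq I] {𝔽 : Type} [Field 𝔽]
set_option linter.unusedSectionVars false

lemma wt_one : wt (1 : FreeMonoid I) = 0 := by
  simp [wt, FreeMonoid.toList_one]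

lemma wt_of (i : I) : wt (FreeMonoid.of i) = δN i := by
  simp only [wt, FreeMonoid.toList_of]
  rw [show ((([i]:List I)):Multiset I) = {i} from rfl, Multiset.toFinsupp_singleton]
  rfl

lemma wt_mul (u u' : FreeMonoid I) : wt (u * u') = wt u + wt u' := by
  simp only [wt, FreeMonoid.toList_mul]
  rw [← Multiset.coe_add, Multiset.toFinsupp_add]

lemma of_mul_ne_one (j : I) (u : FreeMonoid I) : FreeMonoid.of j * u ≠ 1 := by
  intro h
  have := congrArg FreeMonoid.toList h
  simp [FreeMonoid.toList_mul, FreeMonoid.toList_of, FreeMonoid.toList_one] at this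

lemma one_ne_of (j : I) : (1 : FreeMonoid I) ≠ FreeMonoid.of j := by
  intro h
  have := congrArg FreeMonoid.toList h
  simp [FreeMonoid.toList_of, FreeMonoid.toList_one] at this

lemma of_mul_eq_of {j i : I} {u : FreeMonoid I} :
    FreeMonoid.of j * u = FreeMonoid.of i ↔ j = i ∧ u = 1 := by
  constructor
  · intro h
    have h2 := congrArg FreeMonoid.toList h
    simp only [FreeMonoid.toList_mul, FreeMonoid.toList_of] at h2
    have : j = i ∧ FreeMonoid.toList u = [] := by
      constructor
      · exact (List.cons.injEq _ _ _ _ ▸ h2).1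
      · exact (List.cons.injEq _ _ _ _ ▸ h2).2
    refine ⟨this.1, ?_⟩
    have := this.2
    exact FreeMonoid.toList.injective (by simpa [FreeMonoid.toList_one] using this)
  · rintro ⟨rfl, rfl⟩; simp

namespace CartanDatum
variable (cd : CartanDatum I)

lemma dotN_zero_left (μ : I →₀ ℕ) : cd.dotN 0 μ = 0 := by
  simp [dotN]

lemma dotN_zero_right (ν : I →₀ ℕ) : cd.dotN ν 0 = 0 := by
  simp [dotN]

lemma dotN_comm (ν μ : I →₀ ℕ) : cd.dotN ν μ = cd.dotN μ ν := by
  rw [dotN, dotN, Finsupp.sum_comm]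
  refine Finsupp.sum_congr fun i _ => Finsupp.sum_congr fun j _ => ?_
  rw [cd.symm]; ring

end CartanDatum

namespace MultForm
variable (f : MultForm I 𝔽)

lemma zero_right (μ : I →₀ ℕ) : f.f μ 0 = 1 := by
  have h := f.add_right μ 0 0
  simp only [add_zero] at h
  have := f.ne_zero μ 0
  exact (mul_left_cancel₀ this (by rw [mul_one]; exact h)).symm

lemma zero_left (μ : I →₀ ℕ) : f.f 0 μ = 1 := by
  have h := f.add_left 0 0 μ
  simp only [add_zero] at h
  have := f.ne_zero 0 μ
  exact (mul_left_cancel₀ this (by rw [mul_one]; exact h)).symm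

end MultForm


------------------------------------------------------------------
-- single-element computation lemmas
------------------------------------------------------------------

lemma oneFA : (1 : FA 𝔽 I) = MonoidAlgebra.single 1 1 := MonoidAlgebra.one_def

lemma theta_def (i : I) : θ 𝔽 i = MonoidAlgebra.single (FreeMonoid.of i) 1 :=
  MonoidAlgebra.of_apply ..

lemma tmul_single_single (w u : FreeMonoid I) (a b : 𝔽) :
    tmul (MonoidAlgebra.single w a) (MonoidAlgebra.single u b)
      = MonoidAlgebra.single (w, u) (a * b) := by
  unfold tmul
  rw [MonoidAlgebra.coeff_single, MonoidAlgebra.coeff_single]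
  rw [Finsupp.sum_single_index, Finsupp.sum_single_index]
  · rfl
  · simp
  · rw [Finsupp.sum_single_index] <;> simp

lemma tMul_single_left (cd : CartanDatum I) (v : 𝔽) (β : MultForm I 𝔽)
    (p : FreeMonoid I × FreeMonoid I) (c : 𝔽) (z' : TA 𝔽 I) :
    tMul cd v β (MonoidAlgebra.single p c) z'
      = Finsupp.sum (z'.coeff : (FreeMonoid I × FreeMonoid I) →₀ 𝔽) (fun q b =>
          MonoidAlgebra.single (p.1 * q.1, p.2 * q.2)
            (c * b * v ^ (-(cd.dotN (wt q.1) (wt p.2))) * β.f (wt p.2) (wt q.1))) := by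
  unfold tMul
  rw [MonoidAlgebra.coeff_single, Finsupp.sum_single_index, MonoidAlgebra.ofCoeff_finsuppSum]
  · rfl
  simp

lemma tMul_add_left (cd : CartanDatum I) (v : 𝔽) (β : MultForm I 𝔽)
    (z₁ z₂ z' : TA 𝔽 I) :
    tMul cd v β (z₁ + z₂) z' = tMul cd v β z₁ z' + tMul cd v β z₂ z' := by
  unfold tMul
  rw [MonoidAlgebra.coeff_add, Finsupp.sum_add_index']
  · rfl
  · intro p; simp
  · intro p b₁ b₂
    rw [← Finsupp.sum_add]
    refine Finsupp.sum_congr fun q _ => ?_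
    rw [← Finsupp.single_add]
    congr 1
    ring

lemma pairT_single_left (α : MultForm I 𝔽) (B : FA 𝔽 I →ₗ[𝔽] FA 𝔽 I →ₗ[𝔽] 𝔽)
    (p : FreeMonoid I × FreeMonoid I) (a : 𝔽) (z' : TA 𝔽 I) :
    pairT α B (MonoidAlgebra.single p a) z'
      = Finsupp.sum (z'.coeff : (FreeMonoid I × FreeMonoid I) →₀ 𝔽) (fun q b =>
          a * b * α.f (wt p.1) (wt p.2)
            * B (MonoidAlgebra.single p.1 1) (MonoidAlgebra.single q.1 1)
            * B (MonoidAlgebra.single p.2 1) (MonoidAlgebra.single q.2 1)) := by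
  unfold pairT
  rw [MonoidAlgebra.coeff_single, Finsupp.sum_single_index]
  simp

lemma pairT_single_single (α : MultForm I 𝔽) (B : FA 𝔽 I →ₗ[𝔽] FA 𝔽 I →ₗ[𝔽] 𝔽)
    (p q : FreeMonoid I × FreeMonoid I) (a b : 𝔽) :
    pairT α B (MonoidAlgebra.single p a) (MonoidAlgebra.single q b)
      = a * b * α.f (wt p.1) (wt p.2)
          * B (MonoidAlgebra.single p.1 1) (MonoidAlgebra.single q.1 1)
          * B (MonoidAlgebra.single p.2 1) (MonoidAlgebra.single q.2 1) := by
  rw [pairT_single_left, MonoidAlgebra.coeff_single, Finsupp.sum_single_index]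
  simp

lemma pairT_add_left (α : MultForm I 𝔽) (B : FA 𝔽 I →ₗ[𝔽] FA 𝔽 I →ₗ[𝔽] 𝔽)
    (z₁ z₂ z' : TA 𝔽 I) :
    pairT α B (z₁ + z₂) z' = pairT α B z₁ z' + pairT α B z₂ z' := by
  unfold pairT
  rw [MonoidAlgebra.coeff_add, Finsupp.sum_add_index']
  · intro p; simp
  · intro p b₁ b₂
    rw [← Finsupp.sum_add]
    refine Finsupp.sum_congr fun q _ => ?_
    ring

instance : DecidableEq (FreeMonoid I) :=
  fun a b => decidable_of_iff (a.toList = b.toList) FreeMonoid.toList.injective.eq_iff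

/-- extraction of the component whose second factor is `u`. -/
def extr (u : FreeMonoid I) : TA 𝔽 I →ₗ[𝔽] FA 𝔽 I where
  toFun z := Finsupp.sum (z.coeff : (FreeMonoid I × FreeMonoid I) →₀ 𝔽) fun p a =>
    if p.2 = u then (MonoidAlgebra.single p.1 a : FA 𝔽 I) else 0
  map_add' z₁ z₂ :=
    Finsupp.sum_add_index' (fun p => by split <;> simp)
      (fun p b₁ b₂ => by split <;> simp [Finsupp.single_add])
  map_smul' c z := by
    show (Finsupp.sum ((c • z).coeff : (FreeMonoid I × FreeMonoid I) →₀ 𝔽) fun p a =>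
        if p.2 = u then (MonoidAlgebra.single p.1 a : FA 𝔽 I) else 0)
      = c • Finsupp.sum (z.coeff : (FreeMonoid I × FreeMonoid I) →₀ 𝔽) fun p a =>
        if p.2 = u then (MonoidAlgebra.single p.1 a : FA 𝔽 I) else 0
    rw [MonoidAlgebra.coeff_smul, Finsupp.sum_smul_index' (fun p => by split <;> simp), Finsupp.smul_sum]
    exact Finsupp.sum_congr fun p _ => by
      split <;> simp [MonoidAlgebra.smul_single']

/-- extraction of the component whose first factor is `u`. -/
def extl (u : FreeMonoid I) : TA 𝔽 I →ₗ[𝔽] FA 𝔽 I where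
  toFun z := Finsupp.sum (z.coeff : (FreeMonoid I × FreeMonoid I) →₀ 𝔽) fun p a =>
    if p.1 = u then (MonoidAlgebra.single p.2 a : FA 𝔽 I) else 0
  map_add' z₁ z₂ :=
    Finsupp.sum_add_index' (fun p => by split <;> simp)
      (fun p b₁ b₂ => by split <;> simp [Finsupp.single_add])
  map_smul' c z := by
    show (Finsupp.sum ((c • z).coeff : (FreeMonoid I × FreeMonoid I) →₀ 𝔽) fun p a =>
        if p.1 = u then (MonoidAlgebra.single p.2 a : FA 𝔽 I) else 0)
      = c • Finsupp.sum (z.coeff : (FreeMonoid I × FreeMonoid I) →₀ 𝔽) fun p a =>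
        if p.1 = u then (MonoidAlgebra.single p.2 a : FA 𝔽 I) else 0
    rw [MonoidAlgebra.coeff_smul, Finsupp.sum_smul_index' (fun p => by split <;> simp), Finsupp.smul_sum]
    exact Finsupp.sum_congr fun p _ => by
      split <;> simp [MonoidAlgebra.smul_single']

lemma extr_single (u : FreeMonoid I) (p : FreeMonoid I × FreeMonoid I) (a : 𝔽) :
    extr u (MonoidAlgebra.single p a)
      = if p.2 = u then (MonoidAlgebra.single p.1 a : FA 𝔽 I) else 0 := by
  show (Finsupp.sum (Finsupp.single p a) fun p a =>
      if p.2 = u then (MonoidAlgebra.single p.1 a : FA 𝔽 I) else 0) = _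
  refine Finsupp.sum_single_index ?_
  split <;> simp

lemma extl_single (u : FreeMonoid I) (p : FreeMonoid I × FreeMonoid I) (a : 𝔽) :
    extl u (MonoidAlgebra.single p a)
      = if p.1 = u then (MonoidAlgebra.single p.2 a : FA 𝔽 I) else 0 := by
  show (Finsupp.sum (Finsupp.single p a) fun p a =>
      if p.1 = u then (MonoidAlgebra.single p.2 a : FA 𝔽 I) else 0) = _
  refine Finsupp.sum_single_index ?_
  split <;> simp


lemma extr_apply (u : FreeMonoid I) (z : TA 𝔽 I) :
    extr u z = Finsupp.sum (z.coeff : (FreeMonoid I × FreeMonoid I) →₀ 𝔽) (fun p a =>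
      if p.2 = u then (MonoidAlgebra.single p.1 a : FA 𝔽 I) else 0) := rfl

lemma extl_apply (u : FreeMonoid I) (z : TA 𝔽 I) :
    extl u z = Finsupp.sum (z.coeff : (FreeMonoid I × FreeMonoid I) →₀ 𝔽) (fun p a =>
      if p.1 = u then (MonoidAlgebra.single p.2 a : FA 𝔽 I) else 0) := rfl

lemma single_mul_single' (w u : FreeMonoid I) (a b : 𝔽) :
    (MonoidAlgebra.single w a : FA 𝔽 I) * MonoidAlgebra.single u b
      = MonoidAlgebra.single (w * u) (a * b) := MonoidAlgebra.single_mul_single ..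

lemma theta_mul_extr (j : I) (u : FreeMonoid I) (z : TA 𝔽 I) :
    θ 𝔽 j * extr u z = Finsupp.sum (z.coeff : (FreeMonoid I × FreeMonoid I) →₀ 𝔽) (fun q b =>
      if q.2 = u then (MonoidAlgebra.single (FreeMonoid.of j * q.1) b : FA 𝔽 I) else 0) := by
  rw [extr_apply, Finsupp.mul_sum]
  refine Finsupp.sum_congr fun q _ => ?_
  rw [mul_ite, mul_zero, theta_def, single_mul_single', one_mul]

lemma theta_mul_extl (j : I) (u : FreeMonoid I) (z : TA 𝔽 I) :
    θ 𝔽 j * extl u z = Finsupp.sum (z.coeff : (FreeMonoid I × FreeMonoid I) →₀ 𝔽) (fun q b =>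
      if q.1 = u then (MonoidAlgebra.single (FreeMonoid.of j * q.2) b : FA 𝔽 I) else 0) := by
  rw [extl_apply, Finsupp.mul_sum]
  refine Finsupp.sum_congr fun q _ => ?_
  rw [mul_ite, mul_zero, theta_def, single_mul_single', one_mul]


lemma isHomog_theta (j : I) : IsHomog (δN j) (θ 𝔽 j) := by
  intro w hw
  rw [theta_def] at hw
  have := Finsupp.support_single_subset hw
  simp only [Finset.mem_singleton] at this
  subst this
  exact wt_of j

lemma isHomog_single (w : FreeMonoid I) :
    IsHomog (wt w) (MonoidAlgebra.single w (1:𝔽)) := by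
  intro u hu
  have := Finsupp.support_single_subset hu
  simp only [Finset.mem_singleton] at this
  subst this
  rfl

section WithR

variable (cd : CartanDatum I) (v : 𝔽) (β : MultForm I 𝔽)
variable (r : FA 𝔽 I →ₗ[𝔽] TA 𝔽 I)

lemma r_one' (hr1 : r 1 = tmul 1 1) :
    r (MonoidAlgebra.single (1 : FreeMonoid I) (1:𝔽))
      = MonoidAlgebra.single ((1 : FreeMonoid I), (1 : FreeMonoid I)) (1:𝔽) := by
  rw [← oneFA, hr1, oneFA, tmul_single_single, one_mul]

lemma r_single_cons
    (hrθ : ∀ i : I, r (θ 𝔽 i) = tmul (θ 𝔽 i) 1 + tmul 1 (θ 𝔽 i))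
    (hrm : ∀ x y : FA 𝔽 I, r (x * y) = tMul cd v β (r x) (r y))
    (j : I) (w' : FreeMonoid I) :
    r (MonoidAlgebra.single (FreeMonoid.of j * w') (1:𝔽))
      = tMul cd v β (MonoidAlgebra.single ((FreeMonoid.of j : FreeMonoid I), (1:FreeMonoid I)) (1:𝔽))
          (r (MonoidAlgebra.single w' 1))
        + tMul cd v β (MonoidAlgebra.single ((1:FreeMonoid I), (FreeMonoid.of j : FreeMonoid I)) (1:𝔽))
            (r (MonoidAlgebra.single w' 1)) := by
  have h1 : MonoidAlgebra.single (FreeMonoid.of j * w') (1:𝔽)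
      = θ 𝔽 j * MonoidAlgebra.single w' 1 := by
    rw [theta_def, single_mul_single', one_mul]
  rw [h1, hrm, hrθ, tMul_add_left]
  congr 2
  · rw [theta_def, oneFA, tmul_single_single, one_mul]
  · rw [theta_def, oneFA, tmul_single_single, one_mul]

lemma r_homog
    (hr1 : r 1 = tmul 1 1)
    (hrθ : ∀ i : I, r (θ 𝔽 i) = tmul (θ 𝔽 i) 1 + tmul 1 (θ 𝔽 i))
    (hrm : ∀ x y : FA 𝔽 I, r (x * y) = tMul cd v β (r x) (r y)) :
    ∀ (w : FreeMonoid I),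
      ∀ p ∈ Finsupp.support
          ((r (MonoidAlgebra.single w (1:𝔽))).coeff : (FreeMonoid I × FreeMonoid I) →₀ 𝔽),
        wt p.1 + wt p.2 = wt w := by
  intro w
  induction w using FreeMonoid.inductionOn' with
  | one =>
    rw [r_one' r hr1]
    intro p hp
    have hp' := Finsupp.support_single_subset hp
    simp only [Finset.mem_singleton] at hp'
    subst hp'
    simp [wt_one]
  | of_mul j w' ih =>
    rw [r_single_cons cd v β r hrθ hrm, tMul_single_left, tMul_single_left]
    simp only [MonoidAlgebra.coeff_add, MonoidAlgebra.coeff_finsuppSum]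
    intro p hp
    have hp' := Finsupp.support_add hp
    rw [Finset.mem_union] at hp'
    rcases hp' with hp' | hp' <;>
    · obtain ⟨q, hq, hpq⟩ := Finset.mem_biUnion.mp (Finsupp.support_sum hp')
      have := Finsupp.support_single_subset hpq
      simp only [Finset.mem_singleton] at this
      subst this
      simp only [wt_mul, wt_of, wt_one]
      rw [← ih q hq]
      abel


lemma extr_tMul_single (u : FreeMonoid I) (p : FreeMonoid I × FreeMonoid I) (c : 𝔽)
    (z' : TA 𝔽 I) :
    extr u (tMul cd v β (MonoidAlgebra.single p c) z')
      = Finsupp.sum (z'.coeff : (FreeMonoid I × FreeMonoid I) →₀ 𝔽) (fun q b =>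
          if p.2 * q.2 = u then
            (MonoidAlgebra.single (p.1 * q.1)
              (c * b * v ^ (-(cd.dotN (wt q.1) (wt p.2))) * β.f (wt p.2) (wt q.1)) : FA 𝔽 I)
          else 0) := by
  rw [tMul_single_left, map_finsuppSum]
  exact Finsupp.sum_congr fun q _ => extr_single ..

lemma extl_tMul_single (u : FreeMonoid I) (p : FreeMonoid I × FreeMonoid I) (c : 𝔽)
    (z' : TA 𝔽 I) :
    extl u (tMul cd v β (MonoidAlgebra.single p c) z')
      = Finsupp.sum (z'.coeff : (FreeMonoid I × FreeMonoid I) →₀ 𝔽) (fun q b =>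
          if p.1 * q.1 = u then
            (MonoidAlgebra.single (p.2 * q.2)
              (c * b * v ^ (-(cd.dotN (wt q.1) (wt p.2))) * β.f (wt p.2) (wt q.1)) : FA 𝔽 I)
          else 0) := by
  rw [tMul_single_left, map_finsuppSum]
  exact Finsupp.sum_congr fun q _ => extl_single ..

variable (hr1 : r 1 = tmul 1 1)
variable (hrθ : ∀ i : I, r (θ 𝔽 i) = tmul (θ 𝔽 i) 1 + tmul 1 (θ 𝔽 i))
variable (hrm : ∀ x y : FA 𝔽 I, r (x * y) = tMul cd v β (r x) (r y))

include hr1 hrθ hrm in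
lemma extr_one_r :
    ∀ w : FreeMonoid I, extr 1 (r (MonoidAlgebra.single w (1:𝔽)))
      = MonoidAlgebra.single w 1 := by
  intro w
  induction w using FreeMonoid.inductionOn' with
  | one =>
    rw [r_one' r hr1, extr_single, if_pos rfl]
  | of_mul j w' ih =>
    rw [r_single_cons cd v β r hrθ hrm, map_add, extr_tMul_single, extr_tMul_single]
    have h1 : (Finsupp.sum ((r (MonoidAlgebra.single w' (1:𝔽))).coeff : (FreeMonoid I × FreeMonoid I) →₀ 𝔽)
        (fun q b => if ((FreeMonoid.of j : FreeMonoid I), (1:FreeMonoid I)).2 * q.2 = 1 then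
            (MonoidAlgebra.single (((FreeMonoid.of j : FreeMonoid I), (1:FreeMonoid I)).1 * q.1)
              ((1:𝔽) * b * v ^ (-(cd.dotN (wt q.1) (wt ((FreeMonoid.of j : FreeMonoid I), (1:FreeMonoid I)).2)))
                * β.f (wt ((FreeMonoid.of j : FreeMonoid I), (1:FreeMonoid I)).2) (wt q.1)) : FA 𝔽 I)
          else 0))
        = θ 𝔽 j * extr 1 (r (MonoidAlgebra.single w' 1)) := by
      rw [theta_mul_extr]
      refine Finsupp.sum_congr fun q _ => ?_
      simp [wt_one, cd.dotN_zero_right, (β.zero_left _)]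
    have h2 : (Finsupp.sum ((r (MonoidAlgebra.single w' (1:𝔽))).coeff : (FreeMonoid I × FreeMonoid I) →₀ 𝔽)
        (fun q b => if ((1:FreeMonoid I), (FreeMonoid.of j : FreeMonoid I)).2 * q.2 = 1 then
            (MonoidAlgebra.single (((1:FreeMonoid I), (FreeMonoid.of j : FreeMonoid I)).1 * q.1)
              ((1:𝔽) * b * v ^ (-(cd.dotN (wt q.1) (wt ((1:FreeMonoid I), (FreeMonoid.of j : FreeMonoid I)).2)))
                * β.f (wt ((1:FreeMonoid I), (FreeMonoid.of j : FreeMonoid I)).2) (wt q.1)) : FA 𝔽 I)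
          else 0)) = 0 := by
      refine (Finsupp.sum_congr (g2 := fun _ _ => (0 : FA 𝔽 I)) ?_).trans Finset.sum_const_zero
      intro q _
      rw [if_neg]
      exact of_mul_ne_one j q.2
    rw [h1, h2, add_zero, ih, theta_def, single_mul_single', one_mul]

include hr1 hrθ hrm in
lemma extl_one_r :
    ∀ w : FreeMonoid I, extl 1 (r (MonoidAlgebra.single w (1:𝔽)))
      = MonoidAlgebra.single w 1 := by
  intro w
  induction w using FreeMonoid.inductionOn' with
  | one =>
    rw [r_one' r hr1, extl_single, if_pos rfl]
  | of_mul j w' ih =>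
    rw [r_single_cons cd v β r hrθ hrm, map_add, extl_tMul_single, extl_tMul_single]
    have h1 : (Finsupp.sum ((r (MonoidAlgebra.single w' (1:𝔽))).coeff : (FreeMonoid I × FreeMonoid I) →₀ 𝔽)
        (fun q b => if ((FreeMonoid.of j : FreeMonoid I), (1:FreeMonoid I)).1 * q.1 = 1 then
            (MonoidAlgebra.single (((FreeMonoid.of j : FreeMonoid I), (1:FreeMonoid I)).2 * q.2)
              ((1:𝔽) * b * v ^ (-(cd.dotN (wt q.1) (wt ((FreeMonoid.of j : FreeMonoid I), (1:FreeMonoid I)).2)))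
                * β.f (wt ((FreeMonoid.of j : FreeMonoid I), (1:FreeMonoid I)).2) (wt q.1)) : FA 𝔽 I)
          else 0)) = 0 := by
      refine (Finsupp.sum_congr (g2 := fun _ _ => (0 : FA 𝔽 I)) ?_).trans Finset.sum_const_zero
      intro q _
      rw [if_neg]
      exact of_mul_ne_one j q.1
    have h2 : (Finsupp.sum ((r (MonoidAlgebra.single w' (1:𝔽))).coeff : (FreeMonoid I × FreeMonoid I) →₀ 𝔽)
        (fun q b => if ((1:FreeMonoid I), (FreeMonoid.of j : FreeMonoid I)).1 * q.1 = 1 then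
            (MonoidAlgebra.single (((1:FreeMonoid I), (FreeMonoid.of j : FreeMonoid I)).2 * q.2)
              ((1:𝔽) * b * v ^ (-(cd.dotN (wt q.1) (wt ((1:FreeMonoid I), (FreeMonoid.of j : FreeMonoid I)).2)))
                * β.f (wt ((1:FreeMonoid I), (FreeMonoid.of j : FreeMonoid I)).2) (wt q.1)) : FA 𝔽 I)
          else 0))
        = θ 𝔽 j * extl 1 (r (MonoidAlgebra.single w' 1)) := by
      rw [theta_mul_extl]
      refine Finsupp.sum_congr fun q _ => ?_
      by_cases hc : q.1 = 1
      · rw [if_pos (by rw [hc, one_mul]), if_pos hc, hc, wt_one, cd.dotN_zero_left]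
        simp [(β.zero_right _)]
      · rw [if_neg (by rw [one_mul]; exact hc), if_neg hc]
    rw [h1, h2, zero_add, ih, theta_def, single_mul_single', one_mul]


include hr1 hrθ hrm in
lemma extr_r (i : I) (ri : FA 𝔽 I →ₗ[𝔽] FA 𝔽 I)
    (hri1 : ri 1 = 0)
    (hriθ : ∀ j : I, ri (θ 𝔽 j) = if i = j then 1 else 0)
    (hrim : ∀ (ν μ : I →₀ ℕ) (x y : FA 𝔽 I), IsHomog ν x → IsHomog μ y →
      ri (x * y) = (v ^ (-(cd.dotN (δN i) μ)) * β.f (δN i) μ) • (ri x * y) + x * ri y) :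
    ∀ w : FreeMonoid I, extr (FreeMonoid.of i) (r (MonoidAlgebra.single w (1:𝔽)))
      = ri (MonoidAlgebra.single w 1) := by
  intro w
  induction w using FreeMonoid.inductionOn' with
  | one =>
    rw [r_one' r hr1, extr_single, if_neg (one_ne_of i), ← oneFA, hri1]
  | of_mul j w' ih =>
    have hrhs : ri (MonoidAlgebra.single (FreeMonoid.of j * w') (1:𝔽))
        = (if i = j then (v ^ (-(cd.dotN (δN i) (wt w'))) * β.f (δN i) (wt w'))
              • (MonoidAlgebra.single w' (1:𝔽)) else 0)
          + θ 𝔽 j * ri (MonoidAlgebra.single w' 1) := by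
      rw [show MonoidAlgebra.single (FreeMonoid.of j * w') (1:𝔽)
            = θ 𝔽 j * MonoidAlgebra.single w' 1 by
          rw [theta_def, single_mul_single', one_mul],
        hrim (δN j) (wt w') _ _ (isHomog_theta j) (isHomog_single w'), hriθ]
      congr 1
      split
      · rw [one_mul]
      · rw [zero_mul, smul_zero]
    rw [r_single_cons cd v β r hrθ hrm, map_add, extr_tMul_single, extr_tMul_single]
    have h1 : (Finsupp.sum ((r (MonoidAlgebra.single w' (1:𝔽))).coeff : (FreeMonoid I × FreeMonoid I) →₀ 𝔽)
        (fun q b => if ((FreeMonoid.of j : FreeMonoid I), (1:FreeMonoid I)).2 * q.2 = FreeMonoid.of i then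
            (MonoidAlgebra.single (((FreeMonoid.of j : FreeMonoid I), (1:FreeMonoid I)).1 * q.1)
              ((1:𝔽) * b * v ^ (-(cd.dotN (wt q.1) (wt ((FreeMonoid.of j : FreeMonoid I), (1:FreeMonoid I)).2)))
                * β.f (wt ((FreeMonoid.of j : FreeMonoid I), (1:FreeMonoid I)).2) (wt q.1)) : FA 𝔽 I)
          else 0))
        = θ 𝔽 j * extr (FreeMonoid.of i) (r (MonoidAlgebra.single w' 1)) := by
      rw [theta_mul_extr]
      refine Finsupp.sum_congr fun q _ => ?_
      simp [wt_one, cd.dotN_zero_right, (β.zero_left _)]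
    have h2 : (Finsupp.sum ((r (MonoidAlgebra.single w' (1:𝔽))).coeff : (FreeMonoid I × FreeMonoid I) →₀ 𝔽)
        (fun q b => if ((1:FreeMonoid I), (FreeMonoid.of j : FreeMonoid I)).2 * q.2 = FreeMonoid.of i then
            (MonoidAlgebra.single (((1:FreeMonoid I), (FreeMonoid.of j : FreeMonoid I)).1 * q.1)
              ((1:𝔽) * b * v ^ (-(cd.dotN (wt q.1) (wt ((1:FreeMonoid I), (FreeMonoid.of j : FreeMonoid I)).2)))
                * β.f (wt ((1:FreeMonoid I), (FreeMonoid.of j : FreeMonoid I)).2) (wt q.1)) : FA 𝔽 I)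
          else 0))
        = (if i = j then (v ^ (-(cd.dotN (δN i) (wt w'))) * β.f (δN i) (wt w'))
              • (MonoidAlgebra.single w' (1:𝔽)) else 0) := by
      by_cases hij : i = j
      · subst hij
        rw [if_pos rfl]
        have hsum : (Finsupp.sum ((r (MonoidAlgebra.single w' (1:𝔽))).coeff : (FreeMonoid I × FreeMonoid I) →₀ 𝔽)
            (fun q b => if ((1:FreeMonoid I), (FreeMonoid.of i : FreeMonoid I)).2 * q.2 = FreeMonoid.of i then
                (MonoidAlgebra.single (((1:FreeMonoid I), (FreeMonoid.of i : FreeMonoid I)).1 * q.1)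
                  ((1:𝔽) * b * v ^ (-(cd.dotN (wt q.1) (wt ((1:FreeMonoid I), (FreeMonoid.of i : FreeMonoid I)).2)))
                    * β.f (wt ((1:FreeMonoid I), (FreeMonoid.of i : FreeMonoid I)).2) (wt q.1)) : FA 𝔽 I)
              else 0))
            = Finsupp.sum ((r (MonoidAlgebra.single w' (1:𝔽))).coeff : (FreeMonoid I × FreeMonoid I) →₀ 𝔽)
              (fun q b => (v ^ (-(cd.dotN (δN i) (wt w'))) * β.f (δN i) (wt w'))
                • (if q.2 = 1 then (MonoidAlgebra.single q.1 b : FA 𝔽 I) else 0)) := by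
          refine Finsupp.sum_congr fun q hq => ?_
          by_cases hc : q.2 = 1
          · rw [if_pos (show (((1:FreeMonoid I), (FreeMonoid.of i : FreeMonoid I)).2 * q.2 : FreeMonoid I) = FreeMonoid.of i by
                show FreeMonoid.of i * q.2 = FreeMonoid.of i
                rw [hc, mul_one]), if_pos hc]
            have hq1 : wt q.1 = wt w' := by
              have hh := r_homog cd v β r hr1 hrθ hrm w' q hq
              rw [hc, wt_one, add_zero] at hh
              exact hh
            show MonoidAlgebra.single ((1 : FreeMonoid I) * q.1) _ = _
            rw [one_mul, MonoidAlgebra.smul_single']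
            show MonoidAlgebra.single q.1
                ((1:𝔽) * _ * v ^ (-(cd.dotN (wt q.1) (wt (FreeMonoid.of i))))
                  * β.f (wt (FreeMonoid.of i)) (wt q.1)) = _
            rw [wt_of, hq1, cd.dotN_comm]
            congr 1
            ring
          · rw [if_neg (fun h => hc (of_mul_eq_of.mp h).2), if_neg hc, smul_zero]
        rw [hsum, ← Finsupp.smul_sum, ← extr_apply, extr_one_r cd v β r hr1 hrθ hrm w']
      · rw [if_neg hij]
        refine (Finsupp.sum_congr (g2 := fun _ _ => (0 : FA 𝔽 I)) ?_).trans Finset.sum_const_zero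
        intro q _
        rw [if_neg (fun h => hij ((of_mul_eq_of.mp h).1.symm))]
    rw [h1, h2, ih, hrhs, add_comm]

include hr1 hrθ hrm in
lemma extl_r (i : I) (ir : FA 𝔽 I →ₗ[𝔽] FA 𝔽 I)
    (hir1 : ir 1 = 0)
    (hirθ : ∀ j : I, ir (θ 𝔽 j) = if i = j then 1 else 0)
    (hirm : ∀ (ν μ : I →₀ ℕ) (x y : FA 𝔽 I), IsHomog ν x → IsHomog μ y →
      ir (x * y) = ir x * y + (v ^ (-(cd.dotN (δN i) ν)) * β.f ν (δN i)) • (x * ir y)) :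
    ∀ w : FreeMonoid I, extl (FreeMonoid.of i) (r (MonoidAlgebra.single w (1:𝔽)))
      = ir (MonoidAlgebra.single w 1) := by
  intro w
  induction w using FreeMonoid.inductionOn' with
  | one =>
    rw [r_one' r hr1, extl_single, if_neg (one_ne_of i), ← oneFA, hir1]
  | of_mul j w' ih =>
    have hrhs : ir (MonoidAlgebra.single (FreeMonoid.of j * w') (1:𝔽))
        = (if i = j then (MonoidAlgebra.single w' (1:𝔽)) else 0)
          + (v ^ (-(cd.dotN (δN i) (δN j))) * β.f (δN j) (δN i))
              • (θ 𝔽 j * ir (MonoidAlgebra.single w' 1)) := by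
      rw [show MonoidAlgebra.single (FreeMonoid.of j * w') (1:𝔽)
            = θ 𝔽 j * MonoidAlgebra.single w' 1 by
          rw [theta_def, single_mul_single', one_mul],
        hirm (δN j) (wt w') _ _ (isHomog_theta j) (isHomog_single w'), hirθ]
      congr 1
      split
      · rw [one_mul]
      · rw [zero_mul]
    rw [r_single_cons cd v β r hrθ hrm, map_add, extl_tMul_single, extl_tMul_single]
    have h1 : (Finsupp.sum ((r (MonoidAlgebra.single w' (1:𝔽))).coeff : (FreeMonoid I × FreeMonoid I) →₀ 𝔽)
        (fun q b => if ((FreeMonoid.of j : FreeMonoid I), (1:FreeMonoid I)).1 * q.1 = FreeMonoid.of i then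
            (MonoidAlgebra.single (((FreeMonoid.of j : FreeMonoid I), (1:FreeMonoid I)).2 * q.2)
              ((1:𝔽) * b * v ^ (-(cd.dotN (wt q.1) (wt ((FreeMonoid.of j : FreeMonoid I), (1:FreeMonoid I)).2)))
                * β.f (wt ((FreeMonoid.of j : FreeMonoid I), (1:FreeMonoid I)).2) (wt q.1)) : FA 𝔽 I)
          else 0))
        = (if i = j then (MonoidAlgebra.single w' (1:𝔽)) else 0) := by
      by_cases hij : i = j
      · subst hij
        rw [if_pos rfl]
        refine Eq.trans ?_ (extl_one_r cd v β r hr1 hrθ hrm w')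
        rw [extl_apply]
        refine Finsupp.sum_congr fun q hq => ?_
        by_cases hc : q.1 = 1
        · rw [if_pos (show ((FreeMonoid.of i : FreeMonoid I), (1:FreeMonoid I)).1 * q.1 = FreeMonoid.of i by
              show FreeMonoid.of i * q.1 = FreeMonoid.of i
              rw [hc, mul_one]), if_pos hc]
          show MonoidAlgebra.single ((1 : FreeMonoid I) * q.2) _ = _
          rw [one_mul]
          congr 1
          rw [wt_one, cd.dotN_zero_right, β.zero_left]
          simp
        · rw [if_neg (fun h => hc (of_mul_eq_of.mp h).2), if_neg hc]
      · rw [if_neg hij]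
        refine (Finsupp.sum_congr (g2 := fun _ _ => (0 : FA 𝔽 I)) ?_).trans Finset.sum_const_zero
        intro q _
        rw [if_neg (fun h => hij ((of_mul_eq_of.mp h).1.symm))]
    have h2 : (Finsupp.sum ((r (MonoidAlgebra.single w' (1:𝔽))).coeff : (FreeMonoid I × FreeMonoid I) →₀ 𝔽)
        (fun q b => if ((1:FreeMonoid I), (FreeMonoid.of j : FreeMonoid I)).1 * q.1 = FreeMonoid.of i then
            (MonoidAlgebra.single (((1:FreeMonoid I), (FreeMonoid.of j : FreeMonoid I)).2 * q.2)
              ((1:𝔽) * b * v ^ (-(cd.dotN (wt q.1) (wt ((1:FreeMonoid I), (FreeMonoid.of j : FreeMonoid I)).2)))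
                * β.f (wt ((1:FreeMonoid I), (FreeMonoid.of j : FreeMonoid I)).2) (wt q.1)) : FA 𝔽 I)
          else 0))
        = (v ^ (-(cd.dotN (δN i) (δN j))) * β.f (δN j) (δN i))
            • (θ 𝔽 j * extl (FreeMonoid.of i) (r (MonoidAlgebra.single w' 1))) := by
      rw [theta_mul_extl, Finsupp.smul_sum]
      refine Finsupp.sum_congr fun q hq => ?_
      by_cases hc : q.1 = FreeMonoid.of i
      · rw [if_pos (show ((1:FreeMonoid I), (FreeMonoid.of j : FreeMonoid I)).1 * q.1 = FreeMonoid.of i by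
            show (1 : FreeMonoid I) * q.1 = FreeMonoid.of i
            rw [hc, one_mul]), if_pos hc, MonoidAlgebra.smul_single']
        congr 1
        rw [hc, wt_of]
        show (1:𝔽) * _ * v ^ (-(cd.dotN (δN i) (wt (FreeMonoid.of j)))) * β.f (wt (FreeMonoid.of j)) (δN i) = _
        rw [wt_of]
        ring
      · rw [if_neg (by rw [one_mul]; exact hc), if_neg hc, smul_zero]
    rw [h1, h2, ih]
    exact hrhs.symm

include hr1 hrθ hrm in
lemma extr_r_all (i : I) (ri : FA 𝔽 I →ₗ[𝔽] FA 𝔽 I)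
    (hri1 : ri 1 = 0)
    (hriθ : ∀ j : I, ri (θ 𝔽 j) = if i = j then 1 else 0)
    (hrim : ∀ (ν μ : I →₀ ℕ) (x y : FA 𝔽 I), IsHomog ν x → IsHomog μ y →
      ri (x * y) = (v ^ (-(cd.dotN (δN i) μ)) * β.f (δN i) μ) • (ri x * y) + x * ri y) :
    ∀ x : FA 𝔽 I, extr (FreeMonoid.of i) (r x) = ri x := by
  intro x
  have hx : Finsupp.sum (x.coeff : FreeMonoid I →₀ 𝔽)
      (fun w a => (MonoidAlgebra.single w a : FA 𝔽 I)) = x := MonoidAlgebra.sum_coeff_single x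
  have hsing : ∀ (w : FreeMonoid I) (a : 𝔽),
      extr (FreeMonoid.of i) (r (MonoidAlgebra.single w a)) = ri (MonoidAlgebra.single w a) := by
    intro w a
    rw [show (MonoidAlgebra.single w a : FA 𝔽 I) = a • MonoidAlgebra.single w 1 by
        rw [MonoidAlgebra.smul_single', mul_one],
      map_smul, map_smul, map_smul, extr_r cd v β r hr1 hrθ hrm i ri hri1 hriθ hrim w]
  conv_lhs => rw [← hx]
  conv_rhs => rw [← hx]
  rw [map_finsuppSum, map_finsuppSum, map_finsuppSum]
  exact Finsupp.sum_congr fun w _ => hsing w _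

include hr1 hrθ hrm in
lemma extl_r_all (i : I) (ir : FA 𝔽 I →ₗ[𝔽] FA 𝔽 I)
    (hir1 : ir 1 = 0)
    (hirθ : ∀ j : I, ir (θ 𝔽 j) = if i = j then 1 else 0)
    (hirm : ∀ (ν μ : I →₀ ℕ) (x y : FA 𝔽 I), IsHomog ν x → IsHomog μ y →
      ir (x * y) = ir x * y + (v ^ (-(cd.dotN (δN i) ν)) * β.f ν (δN i)) • (x * ir y)) :
    ∀ x : FA 𝔽 I, extl (FreeMonoid.of i) (r x) = ir x := by
  intro x
  have hx : Finsupp.sum (x.coeff : FreeMonoid I →₀ 𝔽)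
      (fun w a => (MonoidAlgebra.single w a : FA 𝔽 I)) = x := MonoidAlgebra.sum_coeff_single x
  have hsing : ∀ (w : FreeMonoid I) (a : 𝔽),
      extl (FreeMonoid.of i) (r (MonoidAlgebra.single w a)) = ir (MonoidAlgebra.single w a) := by
    intro w a
    rw [show (MonoidAlgebra.single w a : FA 𝔽 I) = a • MonoidAlgebra.single w 1 by
        rw [MonoidAlgebra.smul_single', mul_one],
      map_smul, map_smul, map_smul, extl_r cd v β r hr1 hrθ hrm i ir hir1 hirθ hirm w]
  conv_lhs => rw [← hx]
  conv_rhs => rw [← hx]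
  rw [map_finsuppSum, map_finsuppSum, map_finsuppSum]
  exact Finsupp.sum_congr fun w _ => hsing w _

end WithR

section BLemmas

variable (r : FA 𝔽 I →ₗ[𝔽] TA 𝔽 I)
variable (α : MultForm I 𝔽) (B : FA 𝔽 I →ₗ[𝔽] FA 𝔽 I →ₗ[𝔽] 𝔽)

lemma r_theta' (hrθ : ∀ i : I, r (θ 𝔽 i) = tmul (θ 𝔽 i) 1 + tmul 1 (θ 𝔽 i)) (i : I) :
    r (θ 𝔽 i) = MonoidAlgebra.single ((FreeMonoid.of i : FreeMonoid I), (1:FreeMonoid I)) (1:𝔽)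
      + MonoidAlgebra.single ((1:FreeMonoid I), (FreeMonoid.of i : FreeMonoid I)) 1 := by
  rw [hrθ, theta_def, oneFA, tmul_single_single, tmul_single_single, one_mul]

variable (hrθ : ∀ i : I, r (θ 𝔽 i) = tmul (θ 𝔽 i) 1 + tmul 1 (θ 𝔽 i))
variable (hr1 : r 1 = tmul 1 1)
variable (hBsymm : ∀ x y, B x y = B y x) (hB1 : B 1 1 = 1)
variable (hBr : ∀ x y' y'', B x (y' * y'') = pairT α B (r x) (tmul y' y''))

include hrθ hBsymm hB1 hBr in
lemma B_theta_one (i : I) : B (θ 𝔽 i) 1 = 0 := by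
  have h := hBr (θ 𝔽 i) 1 1
  rw [one_mul, r_theta' r hrθ, oneFA, tmul_single_single, one_mul, pairT_add_left,
    pairT_single_single, pairT_single_single] at h
  simp only [wt_one, wt_of, α.zero_right, α.zero_left, one_mul, mul_one] at h
  rw [← oneFA, ← theta_def, hB1, mul_one, one_mul] at h
  exact add_eq_right.mp h.symm

include hrθ hr1 hBsymm hB1 hBr in
lemma B_one_single (w : FreeMonoid I) :
    B (1 : FA 𝔽 I) (MonoidAlgebra.single w 1) = if w = 1 then 1 else 0 := by
  induction w using FreeMonoid.inductionOn' with
  | one => rw [← oneFA, hB1, if_pos rfl]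
  | of_mul j w' _ =>
    rw [if_neg (of_mul_ne_one j w')]
    rw [show MonoidAlgebra.single (FreeMonoid.of j * w') (1:𝔽)
        = θ 𝔽 j * MonoidAlgebra.single w' 1 by rw [theta_def j, single_mul_single', one_mul]]
    have hz : B (MonoidAlgebra.single (1:FreeMonoid I) (1:𝔽))
        (MonoidAlgebra.single (FreeMonoid.of j) (1:𝔽)) = 0 := by
      rw [← oneFA, ← theta_def j, hBsymm]
      exact B_theta_one r α B hrθ hBsymm hB1 hBr j
    rw [hBr 1 (θ 𝔽 j) (MonoidAlgebra.single w' 1), hr1, oneFA, tmul_single_single,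
      theta_def j, tmul_single_single, pairT_single_single]
    simp [hz]

include hrθ hr1 hBsymm hB1 hBr in
lemma B_theta_single (cd : CartanDatum I) (v : 𝔽) (i : I)
    (hBθ : ∀ i' j : I, B (θ 𝔽 i') (θ 𝔽 j) = if i' = j then (1 - v ^ (-(cd.c i' i')))⁻¹ else 0)
    (w : FreeMonoid I) :
    B (θ 𝔽 i) (MonoidAlgebra.single w 1)
      = if w = FreeMonoid.of i then B (θ 𝔽 i) (θ 𝔽 i) else 0 := by
  induction w using FreeMonoid.inductionOn' with
  | one =>
    rw [if_neg (one_ne_of i), ← oneFA]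
    exact B_theta_one r α B hrθ hBsymm hB1 hBr i
  | of_mul j w' _ =>
    have hz : B (MonoidAlgebra.single (1:FreeMonoid I) (1:𝔽))
        (MonoidAlgebra.single (FreeMonoid.of j) (1:𝔽)) = 0 := by
      rw [← oneFA, ← theta_def j, hBsymm]
      exact B_theta_one r α B hrθ hBsymm hB1 hBr j
    have hw0 : B (MonoidAlgebra.single (1:FreeMonoid I) (1:𝔽))
        (MonoidAlgebra.single w' (1:𝔽)) = if w' = 1 then 1 else 0 := by
      rw [← oneFA]
      exact B_one_single r α B hrθ hr1 hBsymm hB1 hBr w'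
    have hθθ : B (MonoidAlgebra.single (FreeMonoid.of i) (1:𝔽))
        (MonoidAlgebra.single (FreeMonoid.of j) (1:𝔽))
          = if i = j then (1 - v ^ (-(cd.c i i)))⁻¹ else 0 := by
      rw [← theta_def i, ← theta_def j]
      exact hBθ i j
    rw [show MonoidAlgebra.single (FreeMonoid.of j * w') (1:𝔽)
        = θ 𝔽 j * MonoidAlgebra.single w' 1 by rw [theta_def j, single_mul_single', one_mul]]
    rw [hBr (θ 𝔽 i) (θ 𝔽 j) (MonoidAlgebra.single w' 1), r_theta' r hrθ i, theta_def j,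
      tmul_single_single, pairT_add_left, pairT_single_single, pairT_single_single,
      hBθ i i, if_pos rfl]
    simp only [one_mul, mul_one, wt_one, wt_of, α.zero_right, α.zero_left, hz, hw0, hθθ,
      mul_zero, zero_mul, add_zero, zero_add]
    by_cases hw : w' = 1
    · subst hw
      by_cases hij : i = j
      · subst hij
        rw [if_pos rfl, if_pos rfl, if_pos (by rw [mul_one])]
        ring
      · rw [if_neg hij, if_neg (fun hh => hij (of_mul_eq_of.mp hh).1.symm)]
        ring
    · rw [if_neg hw, if_neg (fun hh => hw (of_mul_eq_of.mp hh).2)]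
      ring

end BLemmas

section BExpand

variable (B : FA 𝔽 I →ₗ[𝔽] FA 𝔽 I →ₗ[𝔽] 𝔽)

lemma B_expand (x z : FA 𝔽 I) :
    B x z = Finsupp.sum (x.coeff : FreeMonoid I →₀ 𝔽)
      (fun w a => a * B (MonoidAlgebra.single w 1) z) := by
  have hx : Finsupp.sum (x.coeff : FreeMonoid I →₀ 𝔽)
      (fun w a => (MonoidAlgebra.single w a : FA 𝔽 I)) = x := MonoidAlgebra.sum_coeff_single x
  have hsing : ∀ (w : FreeMonoid I) (a : 𝔽),
      B (MonoidAlgebra.single w a) z = a * B (MonoidAlgebra.single w 1) z := by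
    intro w a
    rw [show (MonoidAlgebra.single w a : FA 𝔽 I) = a • MonoidAlgebra.single w 1 by
        rw [MonoidAlgebra.smul_single', mul_one],
      map_smul, LinearMap.smul_apply, smul_eq_mul]
  conv_lhs => rw [← hx]
  rw [map_finsuppSum, Finsupp.sum, Finsupp.sum, LinearMap.sum_apply]
  exact Finset.sum_congr rfl fun w _ => hsing w _

lemma B_apply_single (X : FA 𝔽 I) (u : FreeMonoid I) (b : 𝔽) :
    B X (MonoidAlgebra.single u b) = b * B X (MonoidAlgebra.single u 1) := by
  rw [show (MonoidAlgebra.single u b : FA 𝔽 I) = b • MonoidAlgebra.single u 1 by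
      rw [MonoidAlgebra.smul_single', mul_one],
    map_smul, smul_eq_mul]

lemma sum_scal (y z : FA 𝔽 I) (c1 c2 : 𝔽) :
    Finsupp.sum (y.coeff : FreeMonoid I →₀ 𝔽)
        (fun w a => a * (c1 * B (MonoidAlgebra.single w 1) z * c2))
      = c1 * B y z * c2 := by
  rw [B_expand B y z, Finsupp.mul_sum, Finsupp.sum_mul]
  exact Finsupp.sum_congr fun w _ => by ring

end BExpand

section FinalHelpers

variable (α : MultForm I 𝔽) (B : FA 𝔽 I →ₗ[𝔽] FA 𝔽 I →ₗ[𝔽] 𝔽)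

lemma pairT_single_pair (w u : FreeMonoid I) (a : 𝔽) (z' : TA 𝔽 I) :
    pairT α B (MonoidAlgebra.single ((w, u)) a) z'
      = Finsupp.sum (z'.coeff : (FreeMonoid I × FreeMonoid I) →₀ 𝔽) (fun q b =>
          a * b * α.f (wt w) (wt u)
            * B (MonoidAlgebra.single w 1) (MonoidAlgebra.single q.1 1)
            * B (MonoidAlgebra.single u 1) (MonoidAlgebra.single q.2 1)) := by
  rw [pairT_single_left]

lemma pairT_sum_left (f : FreeMonoid I →₀ 𝔽) (g : FreeMonoid I → 𝔽 → TA 𝔽 I)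
    (z' : TA 𝔽 I) :
    pairT α B (f.sum g) z' = f.sum fun w a => pairT α B (g w a) z' :=
  map_finsuppSum
    (AddMonoidHom.mk' (fun z => pairT α B z z')
      (fun z₁ z₂ => pairT_add_left α B z₁ z₂ z')) f g

lemma tmul_right_theta (y : FA 𝔽 I) (i : I) :
    tmul y (θ 𝔽 i) = Finsupp.sum (y.coeff : FreeMonoid I →₀ 𝔽)
      (fun w a => (MonoidAlgebra.single ((w, FreeMonoid.of i)) a : TA 𝔽 I)) := by
  unfold tmul
  rw [theta_def]
  rw [MonoidAlgebra.coeff_single, MonoidAlgebra.ofCoeff_finsuppSum]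
  refine Finsupp.sum_congr fun w _ => ?_
  refine (congrArg MonoidAlgebra.ofCoeff (Finsupp.sum_single_index ?_)).trans ?_
  · simp
  · rw [mul_one]; rfl

lemma tmul_left_theta (y : FA 𝔽 I) (i : I) :
    tmul (θ 𝔽 i) y = Finsupp.sum (y.coeff : FreeMonoid I →₀ 𝔽)
      (fun w a => (MonoidAlgebra.single ((FreeMonoid.of i, w)) a : TA 𝔽 I)) := by
  unfold tmul
  rw [theta_def]
  rw [MonoidAlgebra.coeff_single]
  refine (congrArg MonoidAlgebra.ofCoeff (Finsupp.sum_single_index ?_)).trans ?_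
  · rw [show (fun (u : FreeMonoid I) (b : 𝔽) =>
        (Finsupp.single (FreeMonoid.of i, u) ((0:𝔽) * b) : (FreeMonoid I × FreeMonoid I) →₀ 𝔽))
        = fun u b => 0 by funext u b; rw [zero_mul, Finsupp.single_zero]]
    exact Finset.sum_const_zero
  · rw [MonoidAlgebra.ofCoeff_finsuppSum]
    refine Finsupp.sum_congr fun u _ => ?_
    rw [one_mul]; rfl

end FinalHelpers

end AuxLemmas

theorem pairing_theta_adjoint
    {I : Type} [Fintype I] [DecidableEq I] (cd : CartanDatum I)
    {𝔽 : Type} [Field 𝔽] [CharZero 𝔽] (v : 𝔽) (hv : Transcendental ℚ v)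
    (α β : MultForm I 𝔽)
    (hαβ : ∀ i j : I, β.f (δN i) (δN j) * α.f (δN j) (δN i)
      = β.f (δN j) (δN i) * α.f (δN i) (δN j))
    (hββ : ∀ i j : I, β.f (δN i) (δN j) * β.f (δN j) (δN i) = 1)
    (hβii : ∀ i : I, β.f (δN i) (δN i) = 1)
    (r : FA 𝔽 I →ₗ[𝔽] TA 𝔽 I)
    (hr1 : r 1 = tmul 1 1)
    (hrθ : ∀ i : I, r (θ 𝔽 i) = tmul (θ 𝔽 i) 1 + tmul 1 (θ 𝔽 i))
    (hrm : ∀ x y : FA 𝔽 I, r (x * y) = tMul cd v β (r x) (r y))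
    (B : FA 𝔽 I →ₗ[𝔽] FA 𝔽 I →ₗ[𝔽] 𝔽)
    (hBsymm : ∀ x y, B x y = B y x)
    (hB1 : B 1 1 = 1)
    (hBθ : ∀ i j : I, B (θ 𝔽 i) (θ 𝔽 j) = if i = j then (1 - v ^ (-(cd.c i i)))⁻¹ else 0)
    (hBr : ∀ x y' y'', B x (y' * y'') = pairT α B (r x) (tmul y' y''))
    (hBl : ∀ x' x'' y, B (x' * x'') y = pairT α B (tmul x' x'') (r y))
    (ri : I → (FA 𝔽 I →ₗ[𝔽] FA 𝔽 I))
    (hri1 : ∀ i, ri i 1 = 0)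
    (hriθ : ∀ i j : I, ri i (θ 𝔽 j) = if i = j then 1 else 0)
    (hrim : ∀ (i : I) (ν μ : I →₀ ℕ) (x y : FA 𝔽 I), IsHomog ν x → IsHomog μ y →
      ri i (x * y) = (v ^ (-(cd.dotN (δN i) μ)) * β.f (δN i) μ) • (ri i x * y) + x * ri i y)
    (ir : I → (FA 𝔽 I →ₗ[𝔽] FA 𝔽 I))
    (hir1 : ∀ i, ir i 1 = 0)
    (hirθ : ∀ i j : I, ir i (θ 𝔽 j) = if i = j then 1 else 0)
    (hirm : ∀ (i : I) (ν μ : I →₀ ℕ) (x y : FA 𝔽 I), IsHomog ν x → IsHomog μ y →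
      ir i (x * y) = ir i x * y + (v ^ (-(cd.dotN (δN i) ν)) * β.f ν (δN i)) • (x * ir i y))
    :
    ∀ (i : I) (ν : I →₀ ℕ) (y : FA 𝔽 I), IsHomog ν y → ∀ x : FA 𝔽 I,
      B (y * θ 𝔽 i) x = α.f ν (δN i) * B y (ri i x) * B (θ 𝔽 i) (θ 𝔽 i) ∧
      B (θ 𝔽 i * y) x = α.f (δN i) ν * B (θ 𝔽 i) (θ 𝔽 i) * B y (ir i x) := by
  intro i ν y hy x
  have hext_r : ∀ x' : FA 𝔽 I, extr (FreeMonoid.of i) (r x') = ri i x' :=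
    extr_r_all cd v β r hr1 hrθ hrm i (ri i) (hri1 i) (fun j => hriθ i j)
      (fun ν' μ' x' y' hx' hy' => hrim i ν' μ' x' y' hx' hy')
  have hext_l : ∀ x' : FA 𝔽 I, extl (FreeMonoid.of i) (r x') = ir i x' :=
    extl_r_all cd v β r hr1 hrθ hrm i (ir i) (hir1 i) (fun j => hirθ i j)
      (fun ν' μ' x' y' hx' hy' => hirm i ν' μ' x' y' hx' hy')
  have hBts : ∀ u : FreeMonoid I, B (θ 𝔽 i) (MonoidAlgebra.single u 1)
      = if u = FreeMonoid.of i then B (θ 𝔽 i) (θ 𝔽 i) else 0 :=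
    B_theta_single r α B hrθ hr1 hBsymm hB1 hBr cd v i hBθ
  have hpt : ∀ (w : FreeMonoid I) (a : 𝔽),
      pairT α B (MonoidAlgebra.single ((w, FreeMonoid.of i)) a) (r x)
        = a * (α.f (wt w) (δN i) * B (MonoidAlgebra.single w 1) (ri i x)
            * B (θ 𝔽 i) (θ 𝔽 i)) := by
    intro w a
    rw [pairT_single_pair, ← hext_r x, extr_apply, map_finsuppSum]
    conv_rhs => rw [Finsupp.mul_sum, Finsupp.sum_mul, Finsupp.mul_sum]
    refine Finsupp.sum_congr fun q _ => ?_
    rw [wt_of]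
    have hb2 : B (MonoidAlgebra.single (FreeMonoid.of i) (1:𝔽))
        (MonoidAlgebra.single q.2 (1:𝔽))
          = if q.2 = FreeMonoid.of i then B (θ 𝔽 i) (θ 𝔽 i) else 0 := by
      rw [← theta_def i]
      exact hBts q.2
    rw [hb2]
    by_cases hc : q.2 = FreeMonoid.of i
    · rw [if_pos hc, if_pos hc]
      conv_rhs => rw [B_apply_single]
      ring
    · rw [if_neg hc, if_neg hc, map_zero]
      ring
  have hpt2 : ∀ (w : FreeMonoid I) (a : 𝔽),
      pairT α B (MonoidAlgebra.single ((FreeMonoid.of i, w)) a) (r x)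
        = a * (α.f (δN i) (wt w) * B (MonoidAlgebra.single w 1) (ir i x)
            * B (θ 𝔽 i) (θ 𝔽 i)) := by
    intro w a
    rw [pairT_single_pair, ← hext_l x, extl_apply, map_finsuppSum]
    conv_rhs => rw [Finsupp.mul_sum, Finsupp.sum_mul, Finsupp.mul_sum]
    refine Finsupp.sum_congr fun q _ => ?_
    rw [wt_of]
    have hb1 : B (MonoidAlgebra.single (FreeMonoid.of i) (1:𝔽))
        (MonoidAlgebra.single q.1 (1:𝔽))
          = if q.1 = FreeMonoid.of i then B (θ 𝔽 i) (θ 𝔽 i) else 0 := by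
      rw [← theta_def i]
      exact hBts q.1
    rw [hb1]
    by_cases hc : q.1 = FreeMonoid.of i
    · rw [if_pos hc, if_pos hc]
      conv_rhs => rw [B_apply_single]
      ring
    · rw [if_neg hc, if_neg hc, map_zero]
      ring
  constructor
  · rw [hBl y (θ 𝔽 i) x, tmul_right_theta, pairT_sum_left]
    refine Eq.trans (Finsupp.sum_congr ?_)
      (sum_scal B y (ri i x) (α.f ν (δN i)) (B (θ 𝔽 i) (θ 𝔽 i)))
    intro w hw
    rw [hpt w _, hy w hw]
  · rw [hBl (θ 𝔽 i) y x, tmul_left_theta, pairT_sum_left]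
    refine Eq.trans (Finsupp.sum_congr ?_)
      ((sum_scal B y (ir i x) (α.f (δN i) ν) (B (θ 𝔽 i) (θ 𝔽 i))).trans (by ring))
    intro w hw
    rw [hpt2 w _, hy w hw]
end

section
/- For all i≠j in I and every l∈I, one has ₗr(D_{ij}) = 0 and r_l(D_{ij}) = 0 in the free algebra '𝔣, where D_{ij} = Σ_{k+k'=1−a_{ij}} (−1)^k β(i,j)^{−k} θ_i^{(k)} θ_j θ_i^{(k')}. -/
open scoped TensorProduct

noncomputable section

variable {I : Type}

/-! ### Auxiliary lemmas -/
set_option linter.unusedSectionVars false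
set_option maxHeartbeats 1000000

namespace SerreAux

section Basics
variable [DecidableEq I]

lemma wt_one : wt (1 : FreeMonoid I) = 0 := by simp [wt]

lemma wt_mul (w u : FreeMonoid I) : wt (w * u) = wt w + wt u := by
  simp only [wt, FreeMonoid.toList_mul]
  rw [← Multiset.coe_add, map_add]

lemma wt_of (i : I) : wt (FreeMonoid.of i) = δN i := by
  simp [wt, FreeMonoid.toList_of]; rfl

lemma wt_pow (i : I) (n : ℕ) : wt ((FreeMonoid.of i) ^ n) = n • δN i := by
  induction n with
  | zero => simpa using wt_one
  | succ n ih => rw [pow_succ, wt_mul, ih, wt_of, succ_nsmul]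

variable {𝔽 : Type} [Field 𝔽]

lemma θ_single (i : I) : θ 𝔽 i = MonoidAlgebra.single (FreeMonoid.of i) 1 := rfl

lemma θ_pow (i : I) (n : ℕ) :
    (θ 𝔽 i) ^ n = MonoidAlgebra.single ((FreeMonoid.of i) ^ n) (1 : 𝔽) := by
  induction n with
  | zero => simp [MonoidAlgebra.one_def]
  | succ n ih => rw [pow_succ, ih, θ_single, MonoidAlgebra.single_mul_single, mul_one, pow_succ]

lemma homog_single (w : FreeMonoid I) (a : 𝔽) : IsHomog (wt w) (MonoidAlgebra.single w a) := by
  intro u hu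
  have := Finsupp.support_single_subset hu
  simp at this; subst this; rfl

lemma homog_of_wt_eq {w : FreeMonoid I} {ν : I →₀ ℕ} (h : wt w = ν) (a : 𝔽) :
    IsHomog ν (MonoidAlgebra.single w a) := h ▸ homog_single w a

lemma homog_pow (i : I) (n : ℕ) : IsHomog (n • δN i) ((θ 𝔽 i) ^ n) := by
  rw [θ_pow]; exact homog_of_wt_eq (wt_pow i n) 1

lemma homog_θ (i : I) : IsHomog (δN i) (θ 𝔽 i) := by
  rw [θ_single]; exact homog_of_wt_eq (wt_of i) 1

end Basics

section MF
variable {𝔽 : Type} [Field 𝔽] (β : MultForm I 𝔽)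

lemma mf_zero_left (μ : I →₀ ℕ) : β.f 0 μ = 1 := by
  have h := β.add_left 0 0 μ
  rw [add_zero] at h
  have := mul_left_cancel₀ (β.ne_zero 0 μ) (by rw [mul_one, ← h] : β.f 0 μ * 1 = β.f 0 μ * β.f 0 μ)
  exact this.symm

lemma mf_zero_right (μ : I →₀ ℕ) : β.f μ 0 = 1 := by
  have h := β.add_right μ 0 0
  rw [add_zero] at h
  have := mul_left_cancel₀ (β.ne_zero μ 0) (by rw [mul_one, ← h] : β.f μ 0 * 1 = β.f μ 0 * β.f μ 0)
  exact this.symm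

lemma mf_nsmul_left (n : ℕ) (ν μ : I →₀ ℕ) : β.f (n • ν) μ = (β.f ν μ) ^ n := by
  induction n with
  | zero => simpa using mf_zero_left β μ
  | succ n ih => rw [succ_nsmul, β.add_left, ih, pow_succ]

lemma mf_nsmul_right (n : ℕ) (ν μ : I →₀ ℕ) : β.f μ (n • ν) = (β.f μ ν) ^ n := by
  induction n with
  | zero => simpa using mf_zero_right β μ
  | succ n ih => rw [succ_nsmul, β.add_right, ih, pow_succ]

end MF

section DotN
variable [DecidableEq I] (cd : CartanDatum I)

lemma dotN_zero_right (ν : I →₀ ℕ) : cd.dotN ν 0 = 0 := by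
  simp [CartanDatum.dotN]

lemma dotN_add_right (ν μ μ' : I →₀ ℕ) : cd.dotN ν (μ + μ') = cd.dotN ν μ + cd.dotN ν μ' := by
  unfold CartanDatum.dotN
  rw [← Finsupp.sum_add]
  apply Finsupp.sum_congr
  intro i _
  rw [Finsupp.sum_add_index]
  · intro j _; push_cast; ring
  · intro j _ a b; push_cast; ring

lemma dotN_nsmul_right (ν : I →₀ ℕ) (n : ℕ) (μ : I →₀ ℕ) :
    cd.dotN ν (n • μ) = n * cd.dotN ν μ := by
  induction n with
  | zero => simp [dotN_zero_right]
  | succ n ih => rw [succ_nsmul, dotN_add_right, ih]; push_cast; ring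

lemma dotN_δδ (i j : I) : cd.dotN (δN i) (δN j) = cd.c i j := by
  unfold CartanDatum.dotN δN
  rw [Finsupp.sum_single_index, Finsupp.sum_single_index] <;> simp

end DotN

section Transc
variable {𝔽 : Type} [Field 𝔽] [CharZero 𝔽] {v : 𝔽} (hv : Transcendental ℚ v)
include hv

lemma v_ne_zero : v ≠ 0 := by
  intro h
  exact hv ⟨Polynomial.X, Polynomial.X_ne_zero, by simp [h]⟩

lemma v_pow_ne_one {n : ℕ} (hn : n ≠ 0) : v ^ n ≠ 1 := by
  intro h
  exact hv ⟨Polynomial.X ^ n - Polynomial.C 1,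
    Polynomial.X_pow_sub_C_ne_zero (Nat.pos_of_ne_zero hn) 1,
    by simp [h]⟩

lemma v_zpow_ne_one {m : ℤ} (hm : m ≠ 0) : v ^ m ≠ 1 := by
  rcases lt_trichotomy m 0 with h | h | h
  · intro he
    have : v ^ (-m) = 1 := by
      rw [← inv_inj]
      rw [← zpow_neg, neg_neg, he]
      simp
    rw [show -m = ((-m).toNat : ℤ) by omega, zpow_natCast] at this
    exact v_pow_ne_one hv (by omega) this
  · exact absurd h hm
  · rw [show m = (m.toNat : ℤ) by omega, zpow_natCast]
    exact v_pow_ne_one hv (by omega)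

lemma vd_ne_zero (d : ℤ) : v ^ d ≠ 0 := zpow_ne_zero d (v_ne_zero hv)

lemma sub_inv_ne_zero {d : ℤ} (hd : d ≠ 0) : v ^ d - (v ^ d)⁻¹ ≠ 0 := by
  intro h
  have hvd : v ^ d ≠ 0 := vd_ne_zero hv d
  have h1 : v ^ d = (v ^ d)⁻¹ := sub_eq_zero.mp h
  have h2 : v ^ (d + d) = 1 := by
    rw [zpow_add₀ (v_ne_zero hv)]
    nth_rewrite 1 [h1]
    exact inv_mul_cancel₀ hvd
  exact v_zpow_ne_one hv (by omega) h2

lemma qnum_vd_ne_zero {d : ℤ} (hd : d ≠ 0) {n : ℕ} (hn : 1 ≤ n) : qnum (v ^ d) n ≠ 0 := by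
  unfold qnum
  apply div_ne_zero _ (sub_inv_ne_zero hv hd)
  intro h
  have hvd : v ^ d ≠ 0 := vd_ne_zero hv d
  have h1 := sub_eq_zero.mp h
  have h2 : (v ^ d) ^ ((n : ℤ) + (n : ℤ)) = 1 := by
    rw [zpow_add₀ hvd]
    nth_rewrite 2 [h1]
    rw [← zpow_add₀ hvd]
    simp
  rw [← zpow_mul] at h2
  refine v_zpow_ne_one hv ?_ h2
  have : 0 < (n : ℤ) := by exact_mod_cast hn
  intro hc
  rcases mul_eq_zero.mp hc with h' | h' <;> omega

lemma qfact_vd_ne_zero {d : ℤ} (hd : d ≠ 0) (n : ℕ) : qfact (v ^ d) n ≠ 0 := by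
  unfold qfact
  exact Finset.prod_ne_zero_iff.mpr fun k _ => qnum_vd_ne_zero hv hd (by omega)

end Transc

section QBin
variable {𝔽 : Type} [Field 𝔽] {c : 𝔽} (hc : c ≠ 0)
  (hq : ∀ n : ℕ, 1 ≤ n → qnum c n ≠ 0)

lemma qfact_zero : qfact c 0 = 1 := rfl

lemma qfact_succ (n : ℕ) : qfact c (n + 1) = qfact c n * qnum c (n + 1) :=
  Finset.prod_range_succ _ _

include hq in
lemma qfact_ne_zero (n : ℕ) : qfact c n ≠ 0 :=
  Finset.prod_ne_zero_iff.mpr fun k _ => hq _ (by omega)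

include hc in
lemma qnum_split (k m : ℕ) :
    qnum c (k + m) = c ^ (-(k:ℤ)) * qnum c m + c ^ ((m:ℤ)) * qnum c k := by
  unfold qnum
  by_cases hd : c - c⁻¹ = 0
  · simp [hd]
  · push_cast
    rw [← mul_div_assoc, ← mul_div_assoc, ← add_div]
    congr 1
    simp only [mul_sub, ← zpow_add₀ hc]
    ring_nf

include hc hq in
lemma S_vanish : ∀ M : ℕ, 1 ≤ M →
    ∑ k ∈ Finset.range (M + 1),
      (-1 : 𝔽) ^ k * c ^ ((k : ℤ) * ((M : ℤ) - 1)) * (qfact c k * qfact c (M - k))⁻¹ = 0 := by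
  intro M
  induction M with
  | zero => omega
  | succ M ih =>
    intro _
    by_cases hM : 1 ≤ M
    case neg =>
      have hM0 : M = 0 := by omega
      subst hM0
      rw [Finset.sum_range_succ, Finset.sum_range_succ, Finset.sum_range_zero]
      norm_num [qfact_zero, qfact_succ]
    case pos =>
      have hS := ih hM
      have hqM : qnum c (M + 1) ≠ 0 := hq _ (by omega)
      set F : ℕ → 𝔽 := fun k => (-1 : 𝔽) ^ k * c ^ ((k : ℤ) * (((M + 1 : ℕ) : ℤ) - 1)) *
          (qfact c k * qfact c (M + 1 - k))⁻¹ with hFdef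
      set g : ℕ → 𝔽 := fun k =>
        if k ≤ M then (-1 : 𝔽) ^ k * c ^ ((k : ℤ) * ((M : ℤ) - 1)) *
          (qfact c k * qfact c (M - k))⁻¹ * (qnum c (M + 1))⁻¹ else 0 with hgdef
      have hgsum : ∑ k ∈ Finset.range (M + 1), g k = 0 := by
        have hc1 : ∀ k ∈ Finset.range (M + 1), g k =
            ((-1 : 𝔽) ^ k * c ^ ((k : ℤ) * ((M : ℤ) - 1)) * (qfact c k * qfact c (M - k))⁻¹)
              * (qnum c (M + 1))⁻¹ := by
          intro k hk
          rw [hgdef]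
          simp only []
          rw [if_pos (by simp at hk; omega)]
        rw [Finset.sum_congr rfl hc1, ← Finset.sum_mul, hS, zero_mul]
      have key0 : F 0 = g 0 := by
        rw [hFdef, hgdef]
        simp only [if_pos (Nat.zero_le M), Nat.sub_zero]
        rw [qfact_succ]
        push_cast
        rw [mul_inv, mul_inv, mul_inv]
        ring
      have key : ∀ k ∈ Finset.range (M + 1), F (k + 1) = g (k + 1) - c ^ (2 * (M : ℤ)) * g k := by
        intro k hk
        have hkM : k ≤ M := by simp at hk; omega
        have hq1 : qnum c (k + 1) ≠ 0 := hq _ (by omega)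
        have hf1 : qfact c k ≠ 0 := qfact_ne_zero hq k
        rcases Nat.lt_or_ge k M with hlt | hge
        · -- k < M
          obtain ⟨m', rfl⟩ : ∃ m', M = k + m' + 1 := ⟨M - k - 1, by omega⟩
          have e1 : k + m' + 1 + 1 - (k + 1) = m' + 1 := by omega
          have e2 : k + m' + 1 - (k + 1) = m' := by omega
          have e3 : k + m' + 1 - k = m' + 1 := by omega
          rw [hFdef, hgdef]
          simp only [if_pos (by omega : k + 1 ≤ k + m' + 1), if_pos (by omega : k ≤ k + m' + 1),
            e1, e2, e3]
          have hsplit : qnum c (k + m' + 1 + 1) =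
              c ^ (-((k:ℤ)+1)) * qnum c (m' + 1) + c ^ ((m':ℤ)+1) * qnum c (k + 1) := by
            have h := qnum_split hc (k+1) (m'+1)
            rw [show (k + 1) + (m' + 1) = k + m' + 1 + 1 by omega] at h
            rw [h]
            push_cast
            ring_nf
          have hq2 : qnum c (m' + 1) ≠ 0 := hq _ (by omega)
          have hf2 : qfact c m' ≠ 0 := qfact_ne_zero hq m'
          have hqM' : qnum c (k + m' + 1 + 1) ≠ 0 := hq _ (by omega)
          rw [qfact_succ k, qfact_succ m']
          set A := qnum c (k + 1) with hA
          set B := qnum c (m' + 1) with hB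
          set C := qnum c (k + m' + 1 + 1) with hC
          set P := qfact c k with hP
          set Q := qfact c m' with hQ
          apply mul_right_cancel₀ hqM'
          rw [sub_mul]
          nth_rewrite 1 [hsplit]
          field_simp [hq1, hq2, hqM', hf1, hf2]
          push_cast
          have hx : c ^ (((k:ℤ) + 1) * ((k:ℤ) + m' + 1 + 1 - 1)) * c ^ (-((k:ℤ) + 1))
              = c ^ (((k:ℤ) + 1) * ((k:ℤ) + m' + 1 - 1)) := by
            rw [← zpow_add₀ hc]; congr 1; ring
          have hy : c ^ (((k:ℤ) + 1) * ((k:ℤ) + m' + 1 + 1 - 1)) * c ^ ((m':ℤ) + 1)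
              = c ^ (2 * ((k:ℤ) + m' + 1)) * c ^ ((k:ℤ) * ((k:ℤ) + m' + 1 - 1)) := by
            rw [← zpow_add₀ hc, ← zpow_add₀ hc]; congr 1; ring
          linear_combination (-1 : 𝔽) ^ (k + 1) * B * hx + (-1 : 𝔽) ^ (k + 1) * A * hy
        · -- k = M
          have hkM' : M = k := by omega
          subst hkM'
          rw [hFdef, hgdef]
          simp only [if_neg (by omega : ¬ M + 1 ≤ M), if_pos (le_refl M), Nat.sub_self,
            show M + 1 - (M + 1) = 0 by omega]
          rw [qfact_succ M, qfact_zero]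
          set A := qnum c (M + 1) with hA
          set P := qfact c M with hP
          field_simp [hq1, hf1]
          try rw [eq_div_iff (by repeat' apply mul_ne_zero
                                 all_goals assumption)]
          simp only [mul_add, add_mul, mul_sub, sub_mul, ← zpow_add₀ hc, pow_succ]
          push_cast
          ring_nf
          have hcc : c ^ ((M:ℤ) + (M:ℤ) ^ 2) = c ^ ((M:ℤ) * 2) * c ^ (-(M:ℤ) + (M:ℤ) ^ 2) := by
            rw [← zpow_add₀ hc]; congr 1; ring
          linear_combination (-((-1 : 𝔽) ^ M)) * hcc
      show ∑ k ∈ Finset.range (M + 1 + 1), F k = 0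
      rw [Finset.sum_range_succ']
      rw [Finset.sum_congr rfl key, key0]
      rw [Finset.sum_sub_distrib, ← Finset.mul_sum, hgsum, mul_zero, sub_zero]
      have hlast : ∑ k ∈ Finset.range (M + 1), g (k + 1) + g 0
          = ∑ k ∈ Finset.range (M + 2), g k := (Finset.sum_range_succ' g (M + 1)).symm
      rw [hlast, Finset.sum_range_succ, hgsum]
      rw [hgdef]
      simp

lemma qnum_inv (n : ℕ) : qnum c⁻¹ n = qnum c n := by
  unfold qnum
  rw [inv_inv, inv_zpow, inv_zpow, ← zpow_neg, ← zpow_neg, neg_neg]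
  rw [← neg_sub (c ^ (n:ℤ)), ← neg_sub c, neg_div_neg_eq]

lemma qfact_inv (n : ℕ) : qfact c⁻¹ n = qfact c n :=
  Finset.prod_congr rfl fun k _ => qnum_inv _

include hc hq in
lemma S_vanish_neg (M : ℕ) (hM : 1 ≤ M) :
    ∑ k ∈ Finset.range (M + 1),
      (-1 : 𝔽) ^ k * c ^ (-((k : ℤ) * ((M : ℤ) - 1))) * (qfact c k * qfact c (M - k))⁻¹ = 0 := by
  have h := S_vanish (inv_ne_zero hc) (fun n hn => by rw [qnum_inv]; exact hq n hn) M hM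
  simp only [inv_zpow, ← zpow_neg, qfact_inv] at h
  exact h

end QBin


section Deriv
variable [DecidableEq I] {𝔽 : Type} [Field 𝔽] (cd : CartanDatum I) (v : 𝔽) (β : MultForm I 𝔽)

/-- `Qs i n = Σ_{m<n} v^{-2 d_i m}`, the coefficient in `r_i(θ_i^n) = Qs i n • θ_i^{n-1}`. -/
def Qs (i : I) (n : ℕ) : 𝔽 := ∑ m ∈ Finset.range n, v ^ (cd.d i * (-2 * (m : ℤ)))

lemma Qs_zero (i : I) : Qs cd v i 0 = 0 := by simp [Qs]

lemma Qs_one (i : I) : Qs cd v i 1 = 1 := by simp [Qs]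

lemma Qs_succ (i : I) (n : ℕ) :
    Qs cd v i (n + 1) = Qs cd v i n + v ^ (cd.d i * (-2 * (n : ℤ))) :=
  Finset.sum_range_succ _ _

lemma two_d (i : I) : cd.c i i = 2 * cd.d i := by
  obtain ⟨r, hr⟩ := cd.even i
  unfold CartanDatum.d
  omega

/-- Expressing `Qs` via `qnum`. -/
lemma Qs_eq (hv : v ≠ 0) (i : I) (hne : v ^ cd.d i - (v ^ cd.d i)⁻¹ ≠ 0) (n : ℕ) :
    Qs cd v i n = (v ^ cd.d i) ^ (1 - (n : ℤ)) * qnum (v ^ cd.d i) n := by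
  set c : 𝔽 := v ^ cd.d i with hc
  have hc0 : c ≠ 0 := zpow_ne_zero _ hv
  have key : ∀ m : ℕ, Qs cd v i m * (c ^ (1:ℤ) - c ^ (-1:ℤ))
      = c ^ (1 - (m : ℤ)) * (c ^ (m : ℤ) - c ^ (-(m:ℤ))) := by
    intro m
    induction m with
    | zero => simp [Qs_zero]
    | succ m ih =>
      rw [Qs_succ, add_mul, ih]
      have hvz : v ^ (cd.d i * (-2 * (m:ℤ))) = c ^ (-2 * (m:ℤ)) := by
        rw [hc, ← zpow_mul]
      rw [hvz]
      push_cast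
      simp only [mul_sub, sub_mul, ← zpow_add₀ hc0]
      ring_nf
  have key' : Qs cd v i n * (c - c⁻¹) = c ^ (1 - (n : ℤ)) * (c ^ (n : ℤ) - c ^ (-(n:ℤ))) := by
    have h := key n
    rw [zpow_one, zpow_neg, zpow_one] at h
    exact h
  unfold qnum
  rw [← mul_div_assoc, eq_div_iff hne]
  exact key'

variable {cd v β}

section RiLemmas
variable (ri : I → (FA 𝔽 I →ₗ[𝔽] FA 𝔽 I))
  (hβii : ∀ i : I, β.f (δN i) (δN i) = 1)
  (hri1 : ∀ i, ri i 1 = 0)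
  (hriθ : ∀ i j : I, ri i (θ 𝔽 j) = if i = j then 1 else 0)
  (hrim : ∀ (i : I) (ν μ : I →₀ ℕ) (x y : FA 𝔽 I), IsHomog ν x → IsHomog μ y →
      ri i (x * y) = (v ^ (-(cd.dotN (δN i) μ)) * β.f (δN i) μ) • (ri i x * y) + x * ri i y)

include hri1 hriθ hrim in
lemma ri_pow_ne {l i : I} (hli : l ≠ i) (n : ℕ) : ri l ((θ 𝔽 i) ^ n) = 0 := by
  induction n with
  | zero => rw [pow_zero]; exact hri1 l
  | succ n ih =>
    rw [pow_succ', hrim l (δN i) (n • δN i) _ _ (homog_θ i) (homog_pow i n),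
      hriθ, if_neg hli, ih]
    simp

include hβii hri1 hriθ hrim in
lemma ri_pow (i : I) (n : ℕ) :
    ri i ((θ 𝔽 i) ^ n) = (Qs cd v i n) • (θ 𝔽 i) ^ (n - 1) := by
  induction n with
  | zero => rw [pow_zero, Qs_zero, zero_smul]; exact hri1 i
  | succ n ih =>
    rw [pow_succ', hrim i (δN i) (n • δN i) _ _ (homog_θ i) (homog_pow i n),
      hriθ, if_pos rfl, ih]
    rw [dotN_nsmul_right, dotN_δδ, mf_nsmul_right, hβii, one_pow, mul_one, one_mul]
    rw [mul_smul_comm]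
    have hexp : v ^ (-((n : ℤ) * cd.c i i)) = v ^ (cd.d i * (-2 * (n : ℤ))) := by
      congr 1
      rw [two_d cd i]; ring
    cases n with
    | zero =>
      simp only [Nat.sub_self, pow_zero, mul_one, Qs_zero, zero_smul, smul_zero, add_zero,
        Nat.add_sub_cancel]
      rw [Qs_one]
      push_cast
      norm_num
    | succ m =>
      rw [show m + 1 - 1 = m from rfl, ← pow_succ', show m + 1 + 1 - 1 = m + 1 from rfl]
      rw [← add_smul]
      congr 1
      rw [Qs_succ cd v i (m + 1), hexp]
      ring

include hβii hri1 hriθ hrim in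
lemma ri_mon_ne {l i j : I} (hli : l ≠ i) (hlj : l ≠ j) (k k' : ℕ) :
    ri l ((θ 𝔽 i) ^ k * θ 𝔽 j * (θ 𝔽 i) ^ k') = 0 := by
  have h1 : IsHomog (k • δN i + δN j) ((θ 𝔽 i) ^ k * θ 𝔽 j : FA 𝔽 I) := by
    rw [θ_pow, θ_single, MonoidAlgebra.single_mul_single, mul_one]
    exact homog_of_wt_eq (by rw [wt_mul, wt_pow, wt_of]) 1
  rw [hrim l (k • δN i + δN j) (k' • δN i) _ _ h1 (homog_pow i k')]
  rw [ri_pow_ne ri hri1 hriθ hrim hli]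
  rw [hrim l (k • δN i) (δN j) _ _ (homog_pow i k) (homog_θ j)]
  rw [ri_pow_ne ri hri1 hriθ hrim hli, hriθ, if_neg hlj]
  simp

include hβii hri1 hriθ hrim in
lemma ri_mon_j {i j : I} (hij : i ≠ j) (k k' : ℕ) :
    ri j ((θ 𝔽 i) ^ k * θ 𝔽 j * (θ 𝔽 i) ^ k')
      = (v ^ (-((k' : ℤ) * cd.c j i)) * (β.f (δN j) (δN i)) ^ k') • (θ 𝔽 i) ^ (k + k') := by
  rw [mul_assoc]
  have h2 : IsHomog (δN j + k' • δN i) (θ 𝔽 j * (θ 𝔽 i) ^ k' : FA 𝔽 I) := by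
    rw [θ_pow, θ_single, MonoidAlgebra.single_mul_single, mul_one]
    exact homog_of_wt_eq (by rw [wt_mul, wt_pow, wt_of]) 1
  rw [hrim j (k • δN i) (δN j + k' • δN i) _ _ (homog_pow i k) h2]
  rw [ri_pow_ne ri hri1 hriθ hrim (Ne.symm hij)]
  rw [hrim j (δN j) (k' • δN i) _ _ (homog_θ j) (homog_pow i k')]
  rw [ri_pow_ne ri hri1 hriθ hrim (Ne.symm hij), hriθ, if_pos rfl]
  rw [dotN_nsmul_right, dotN_δδ, mf_nsmul_right]
  simp only [zero_mul, smul_zero, zero_add, mul_zero, zero_smul, one_mul, add_zero]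
  rw [mul_smul_comm, ← pow_add]

include hβii hri1 hriθ hrim in
lemma ri_mon_i {i j : I} (hij : i ≠ j) (k k' : ℕ) :
    ri i ((θ 𝔽 i) ^ k * θ 𝔽 j * (θ 𝔽 i) ^ k')
      = (v ^ (-(cd.c i j + (k' : ℤ) * cd.c i i)) * β.f (δN i) (δN j) * Qs cd v i k) •
          ((θ 𝔽 i) ^ (k - 1) * θ 𝔽 j * (θ 𝔽 i) ^ k')
        + (Qs cd v i k') • ((θ 𝔽 i) ^ k * θ 𝔽 j * (θ 𝔽 i) ^ (k' - 1)) := by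
  rw [mul_assoc]
  have h2 : IsHomog (δN j + k' • δN i) (θ 𝔽 j * (θ 𝔽 i) ^ k' : FA 𝔽 I) := by
    rw [θ_pow, θ_single, MonoidAlgebra.single_mul_single, mul_one]
    exact homog_of_wt_eq (by rw [wt_mul, wt_pow, wt_of]) 1
  rw [hrim i (k • δN i) (δN j + k' • δN i) _ _ (homog_pow i k) h2]
  rw [ri_pow ri hβii hri1 hriθ hrim]
  rw [hrim i (δN j) (k' • δN i) _ _ (homog_θ j) (homog_pow i k')]
  rw [ri_pow ri hβii hri1 hriθ hrim, hriθ, if_neg hij]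
  simp only [dotN_add_right, dotN_nsmul_right, dotN_δδ]
  rw [β.add_right, mf_nsmul_right, hβii, one_pow, mul_one]
  simp only [zero_mul, smul_zero, zero_add, add_zero, zero_smul, one_mul]
  simp only [smul_mul_assoc, mul_smul_comm, smul_smul, mul_assoc]

end RiLemmas

section IrLemmas
variable (ir : I → (FA 𝔽 I →ₗ[𝔽] FA 𝔽 I))
  (hβii : ∀ i : I, β.f (δN i) (δN i) = 1)
  (hir1 : ∀ i, ir i 1 = 0)
  (hirθ : ∀ i j : I, ir i (θ 𝔽 j) = if i = j then 1 else 0)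
  (hirm : ∀ (i : I) (ν μ : I →₀ ℕ) (x y : FA 𝔽 I), IsHomog ν x → IsHomog μ y →
      ir i (x * y) = ir i x * y + (v ^ (-(cd.dotN (δN i) ν)) * β.f ν (δN i)) • (x * ir i y))

include hir1 hirθ hirm in
lemma ir_pow_ne {l i : I} (hli : l ≠ i) (n : ℕ) : ir l ((θ 𝔽 i) ^ n) = 0 := by
  induction n with
  | zero => rw [pow_zero]; exact hir1 l
  | succ n ih =>
    rw [pow_succ, hirm l (n • δN i) (δN i) _ _ (homog_pow i n) (homog_θ i),
      hirθ, if_neg hli, ih]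
    simp

include hβii hir1 hirθ hirm in
lemma ir_pow (i : I) (n : ℕ) :
    ir i ((θ 𝔽 i) ^ n) = (Qs cd v i n) • (θ 𝔽 i) ^ (n - 1) := by
  induction n with
  | zero => rw [pow_zero, Qs_zero, zero_smul]; exact hir1 i
  | succ n ih =>
    rw [pow_succ, hirm i (n • δN i) (δN i) _ _ (homog_pow i n) (homog_θ i),
      hirθ, if_pos rfl, ih]
    rw [dotN_nsmul_right, dotN_δδ, mf_nsmul_left, hβii, one_pow, mul_one, mul_one]
    rw [smul_mul_assoc]
    have hexp : v ^ (-((n : ℤ) * cd.c i i)) = v ^ (cd.d i * (-2 * (n : ℤ))) := by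
      congr 1
      rw [two_d cd i]; ring
    cases n with
    | zero =>
      simp only [Nat.sub_self, pow_zero, Qs_zero, zero_smul, zero_mul, zero_add,
        Nat.add_sub_cancel]
      rw [Qs_one]
      try push_cast
      try norm_num
    | succ m =>
      rw [show m + 1 - 1 = m from rfl, ← pow_succ, show m + 1 + 1 - 1 = m + 1 from rfl]
      rw [← add_smul]
      congr 1
      rw [Qs_succ cd v i (m + 1), hexp]
      try ring

include hβii hir1 hirθ hirm in
lemma ir_mon_ne {l i j : I} (hli : l ≠ i) (hlj : l ≠ j) (k k' : ℕ) :
    ir l ((θ 𝔽 i) ^ k * θ 𝔽 j * (θ 𝔽 i) ^ k') = 0 := by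
  have h1 : IsHomog (k • δN i + δN j) ((θ 𝔽 i) ^ k * θ 𝔽 j : FA 𝔽 I) := by
    rw [θ_pow, θ_single, MonoidAlgebra.single_mul_single, mul_one]
    exact homog_of_wt_eq (by rw [wt_mul, wt_pow, wt_of]) 1
  rw [hirm l (k • δN i + δN j) (k' • δN i) _ _ h1 (homog_pow i k')]
  rw [ir_pow_ne ir hir1 hirθ hirm hli]
  rw [hirm l (k • δN i) (δN j) _ _ (homog_pow i k) (homog_θ j)]
  rw [ir_pow_ne ir hir1 hirθ hirm hli, hirθ, if_neg hlj]
  simp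

include hβii hir1 hirθ hirm in
lemma ir_mon_j {i j : I} (hij : i ≠ j) (k k' : ℕ) :
    ir j ((θ 𝔽 i) ^ k * θ 𝔽 j * (θ 𝔽 i) ^ k')
      = (v ^ (-((k : ℤ) * cd.c j i)) * (β.f (δN i) (δN j)) ^ k) • (θ 𝔽 i) ^ (k + k') := by
  rw [mul_assoc]
  have h2 : IsHomog (δN j + k' • δN i) (θ 𝔽 j * (θ 𝔽 i) ^ k' : FA 𝔽 I) := by
    rw [θ_pow, θ_single, MonoidAlgebra.single_mul_single, mul_one]
    exact homog_of_wt_eq (by rw [wt_mul, wt_pow, wt_of]) 1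
  rw [hirm j (k • δN i) (δN j + k' • δN i) _ _ (homog_pow i k) h2]
  rw [ir_pow_ne ir hir1 hirθ hirm (Ne.symm hij)]
  rw [hirm j (δN j) (k' • δN i) _ _ (homog_θ j) (homog_pow i k')]
  rw [ir_pow_ne ir hir1 hirθ hirm (Ne.symm hij), hirθ, if_pos rfl]
  rw [dotN_nsmul_right, dotN_δδ, mf_nsmul_left]
  simp only [zero_mul, smul_zero, zero_add, mul_zero, zero_smul, one_mul, add_zero]
  rw [← pow_add]

include hβii hir1 hirθ hirm in
lemma ir_mon_i {i j : I} (hij : i ≠ j) (k k' : ℕ) :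
    ir i ((θ 𝔽 i) ^ k * θ 𝔽 j * (θ 𝔽 i) ^ k')
      = (Qs cd v i k) • ((θ 𝔽 i) ^ (k - 1) * θ 𝔽 j * (θ 𝔽 i) ^ k')
        + (v ^ (-((k : ℤ) * cd.c i i + cd.c i j)) * β.f (δN j) (δN i) * Qs cd v i k') •
            ((θ 𝔽 i) ^ k * θ 𝔽 j * (θ 𝔽 i) ^ (k' - 1)) := by
  have h1 : IsHomog (k • δN i + δN j) ((θ 𝔽 i) ^ k * θ 𝔽 j : FA 𝔽 I) := by
    rw [θ_pow, θ_single, MonoidAlgebra.single_mul_single, mul_one]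
    exact homog_of_wt_eq (by rw [wt_mul, wt_pow, wt_of]) 1
  rw [hirm i (k • δN i + δN j) (k' • δN i) _ _ h1 (homog_pow i k')]
  rw [hirm i (k • δN i) (δN j) _ _ (homog_pow i k) (homog_θ j)]
  rw [ir_pow ir hβii hir1 hirθ hirm, hirθ, if_neg hij]
  simp only [dotN_add_right, dotN_nsmul_right, dotN_δδ]
  rw [β.add_left, mf_nsmul_left, hβii, one_pow, one_mul]
  simp only [zero_mul, smul_zero, mul_zero, zero_add, add_zero, zero_smul]
  rw [ir_pow ir hβii hir1 hirθ hirm]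
  simp only [smul_mul_assoc, mul_smul_comm, smul_smul, mul_assoc]

end IrLemmas

section CartanFacts
variable (cd : CartanDatum I)

lemma d_pos (i : I) : 0 < cd.d i := by
  have h1 := cd.pos i
  have h2 := two_d cd i
  omega

lemma cij_eq {i j : I} (hij : i ≠ j) : cd.c i j = cd.d i * cd.a i j := by
  obtain ⟨t, ht⟩ := cd.dvd i j hij
  have h2 := two_d cd i
  have hpos := cd.pos i
  have ha : cd.a i j = t := by
    unfold CartanDatum.a
    rw [ht, Int.mul_ediv_cancel_left _ (by omega : cd.c i i ≠ 0)]
  rw [ha]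
  have h3 : 2 * cd.c i j = 2 * (cd.d i * t) := by rw [ht, h2]; ring
  omega

lemma a_nonpos {i j : I} (hij : i ≠ j) : cd.a i j ≤ 0 := by
  obtain ⟨t, ht⟩ := cd.dvd i j hij
  have hpos := cd.pos i
  have hnp := cd.nonpos i j hij
  have ha : cd.a i j = t := by
    unfold CartanDatum.a
    rw [ht, Int.mul_ediv_cancel_left _ (by omega : cd.c i i ≠ 0)]
  rw [ha]
  nlinarith

lemma M_cast {i j : I} (hij : i ≠ j) :
    (((1 - cd.a i j).toNat : ℤ)) = 1 - cd.a i j := by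
  have := a_nonpos cd hij
  omega

lemma M_pos {i j : I} (hij : i ≠ j) : 1 ≤ (1 - cd.a i j).toNat := by
  have := a_nonpos cd hij
  omega

end CartanFacts

end Deriv

section DijEq
variable [DecidableEq I] {𝔽 : Type} [Field 𝔽]

lemma Dij_eq (cd : CartanDatum I) (v : 𝔽) (g : I → I → 𝔽) (i j : I) :
    Dij cd v g i j = ∑ k ∈ Finset.range ((1 - cd.a i j).toNat + 1),
      ((-1 : 𝔽) ^ k * ((g i j)⁻¹) ^ k *
        ((qfact (v ^ cd.d i) k)⁻¹ * (qfact (v ^ cd.d i) ((1 - cd.a i j).toNat - k))⁻¹)) •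
        ((θ 𝔽 i) ^ k * θ 𝔽 j * (θ 𝔽 i) ^ ((1 - cd.a i j).toNat - k)) := by
  unfold Dij θdiv
  apply Finset.sum_congr rfl
  intro k _
  simp only [smul_mul_assoc, mul_smul_comm, smul_smul]
  congr 1
  ring

end DijEq

end SerreAux

end
theorem serre_element_killed_by_ri_ir
    {I : Type} [Fintype I] [DecidableEq I] (cd : CartanDatum I)
    {𝔽 : Type} [Field 𝔽] [CharZero 𝔽] (v : 𝔽) (hv : Transcendental ℚ v)
    (α β : MultForm I 𝔽)
    (hαβ : ∀ i j : I, β.f (δN i) (δN j) * α.f (δN j) (δN i)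
      = β.f (δN j) (δN i) * α.f (δN i) (δN j))
    (hββ : ∀ i j : I, β.f (δN i) (δN j) * β.f (δN j) (δN i) = 1)
    (hβii : ∀ i : I, β.f (δN i) (δN i) = 1)
    (ri : I → (FA 𝔽 I →ₗ[𝔽] FA 𝔽 I))
    (hri1 : ∀ i, ri i 1 = 0)
    (hriθ : ∀ i j : I, ri i (θ 𝔽 j) = if i = j then 1 else 0)
    (hrim : ∀ (i : I) (ν μ : I →₀ ℕ) (x y : FA 𝔽 I), IsHomog ν x → IsHomog μ y →
      ri i (x * y) = (v ^ (-(cd.dotN (δN i) μ)) * β.f (δN i) μ) • (ri i x * y) + x * ri i y)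
    (ir : I → (FA 𝔽 I →ₗ[𝔽] FA 𝔽 I))
    (hir1 : ∀ i, ir i 1 = 0)
    (hirθ : ∀ i j : I, ir i (θ 𝔽 j) = if i = j then 1 else 0)
    (hirm : ∀ (i : I) (ν μ : I →₀ ℕ) (x y : FA 𝔽 I), IsHomog ν x → IsHomog μ y →
      ir i (x * y) = ir i x * y + (v ^ (-(cd.dotN (δN i) ν)) * β.f ν (δN i)) • (x * ir i y))
    :
    ∀ i j : I, i ≠ j → ∀ l : I,
      ir l (Dij cd v (fun a b => β.f (δN a) (δN b)) i j) = 0 ∧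
      ri l (Dij cd v (fun a b => β.f (δN a) (δN b)) i j) = 0 := by
  intro i j hij l
  open SerreAux in
  -- setup
  have hM1 : 1 ≤ (1 - cd.a i j).toNat := M_pos cd hij
  set M : ℕ := (1 - cd.a i j).toNat with hMdef
  have hMc : (M : ℤ) = 1 - cd.a i j := M_cast cd hij
  have hdpos := d_pos cd i
  have hd : cd.d i ≠ 0 := by omega
  have hv0 : v ≠ 0 := v_ne_zero hv
  set u : 𝔽 := v ^ cd.d i with hu
  have hu0 : u ≠ 0 := zpow_ne_zero _ hv0
  have hqu : ∀ n : ℕ, 1 ≤ n → qnum u n ≠ 0 := fun n hn => qnum_vd_ne_zero hv hd hn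
  have hqf : ∀ n, qfact u n ≠ 0 := qfact_vd_ne_zero hv hd
  have hne : u - u⁻¹ ≠ 0 := sub_inv_ne_zero hv hd
  set b : 𝔽 := β.f (δN i) (δN j) with hb
  have hb0 : b ≠ 0 := β.ne_zero _ _
  have hbji : β.f (δN j) (δN i) = b⁻¹ := by
    have h := hββ i j
    field_simp
    linear_combination h
  have hcij : cd.c i j = cd.d i * (1 - (M : ℤ)) := by
    rw [cij_eq cd hij]
    congr 1
    omega
  have hcji : cd.c j i = cd.c i j := cd.symm j i
  have hQn : ∀ n : ℕ, Qs cd v i n = u ^ (1 - (n : ℤ)) * qnum u n :=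
    Qs_eq cd v hv0 i hne
  rw [Dij_eq]
  rw [← hb, ← hu, ← hMdef, map_sum, map_sum]
  constructor
  · -- ir part
    by_cases hli : l = i
    · rw [hli]
      have hterm : ∀ k ∈ Finset.range (M + 1),
          ir i (((-1:𝔽)^k * (b⁻¹)^k * ((qfact u k)⁻¹ * (qfact u (M-k))⁻¹)) •
              ((θ 𝔽 i)^k * θ 𝔽 j * (θ 𝔽 i)^(M-k)))
          = (((-1:𝔽)^k * (b⁻¹)^k * ((qfact u k)⁻¹ * (qfact u (M-k))⁻¹)) *
              Qs cd v i k) • ((θ 𝔽 i)^(k-1) * θ 𝔽 j * (θ 𝔽 i)^(M-k))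
            + (((-1:𝔽)^k * (b⁻¹)^k * ((qfact u k)⁻¹ * (qfact u (M-k))⁻¹)) *
              (v ^ (-((k:ℤ) * cd.c i i + cd.c i j)) * b⁻¹ * Qs cd v i (M-k))) •
              ((θ 𝔽 i)^k * θ 𝔽 j * (θ 𝔽 i)^(M-k-1)) := by
        intro k hk
        rw [map_smul, ir_mon_i ir hβii hir1 hirθ hirm hij, hbji, smul_add, smul_smul, smul_smul]
      rw [Finset.sum_congr rfl hterm, Finset.sum_add_distrib, Finset.sum_range_succ',
        Finset.sum_range_succ]
      simp only [Qs_zero, mul_zero, zero_smul, add_zero, Nat.sub_self]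
      rw [← Finset.sum_add_distrib]
      apply Finset.sum_eq_zero
      intro k hk
      have hkM : k < M := Finset.mem_range.mp hk
      have e1 : M - (k + 1) = M - k - 1 := by omega
      set m' : ℕ := M - k - 1 with hm'
      have e2 : M - k = m' + 1 := by omega
      have e3 : k + 1 - 1 = k := rfl
      rw [e1, e2, e3]
      rw [← add_smul]
      apply smul_eq_zero_of_left
      have hMk : (M : ℤ) = (k : ℤ) + (m' : ℤ) + 1 := by omega
      have hvp : v ^ (-((k:ℤ) * cd.c i i + cd.c i j)) = u ^ ((m':ℤ) - (k:ℤ)) := by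
        rw [hcij, two_d cd i, hu, ← zpow_mul]
        congr 1
        rw [hMk]
        ring
      rw [hQn (k+1), hQn (m'+1), qfact_succ, qfact_succ, hvp]
      have hq1 : qnum u (k+1) ≠ 0 := hqu _ (by omega)
      have hq2 : qnum u (m'+1) ≠ 0 := hqu _ (by omega)
      have hf1 : qfact u k ≠ 0 := hqf k
      have hf2 : qfact u m' ≠ 0 := hqf m'
      have e1 : qnum u (k+1) * (qnum u (k+1))⁻¹ = 1 := mul_inv_cancel₀ hq1
      have e2 : qnum u (m'+1) * (qnum u (m'+1))⁻¹ = 1 := mul_inv_cancel₀ hq2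
      have hz1 : u ^ (1 - ((k+1 : ℕ) : ℤ)) = u ^ (-(k:ℤ)) := by congr 1; push_cast; ring
      have hz2 : u ^ ((m':ℤ) - (k:ℤ)) * u ^ (1 - ((m'+1 : ℕ) : ℤ)) = u ^ (-(k:ℤ)) := by
        rw [← zpow_add₀ hu0]; congr 1; push_cast; ring
      linear_combination (-((-1:𝔽)^k * (b⁻¹)^k * (qfact u k)⁻¹ * (qfact u m')⁻¹) * b⁻¹ * u ^ (1 - ((k+1 : ℕ) : ℤ))) * e1 + (-((-1:𝔽)^k * (b⁻¹)^k * (qfact u k)⁻¹ * (qfact u m')⁻¹) * b⁻¹) * hz1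
        + (((-1:𝔽)^k * (b⁻¹)^k * (qfact u k)⁻¹ * (qfact u m')⁻¹) * b⁻¹ * (u ^ ((m':ℤ) - (k:ℤ)) * u ^ (1 - ((m'+1 : ℕ) : ℤ)))) * e2
        + (((-1:𝔽)^k * (b⁻¹)^k * (qfact u k)⁻¹ * (qfact u m')⁻¹) * b⁻¹) * hz2
    by_cases hlj : l = j
    · rw [hlj]
      have hterm : ∀ k ∈ Finset.range (M + 1),
          ir j (((-1:𝔽)^k * (b⁻¹)^k * ((qfact u k)⁻¹ * (qfact u (M-k))⁻¹)) •
              ((θ 𝔽 i)^k * θ 𝔽 j * (θ 𝔽 i)^(M-k)))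
          = ((-1:𝔽)^k * u ^ ((k:ℤ) * ((M:ℤ)-1)) * (qfact u k * qfact u (M-k))⁻¹) •
              (θ 𝔽 i) ^ M := by
        intro k hk
        have hkM : k ≤ M := by simp at hk; omega
        rw [map_smul, ir_mon_j ir hβii hir1 hirθ hirm hij, ← hb]
        rw [smul_smul, show k + (M - k) = M by omega]
        congr 1
        have hvc : v ^ (-((k:ℤ) * cd.c j i)) = u ^ ((k:ℤ) * ((M:ℤ) - 1)) := by
          rw [hcji, hcij, hu, ← zpow_mul]
          congr 1
          ring
        rw [hvc]
        have hbc : b ^ k * b⁻¹ ^ k = 1 := by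
          rw [← mul_pow, mul_inv_cancel₀ hb0, one_pow]
        linear_combination ((-1:𝔽) ^ k * (qfact u k * qfact u (M - k))⁻¹ *
          u ^ ((k:ℤ) * ((M:ℤ) - 1))) * hbc
      rw [Finset.sum_congr rfl hterm, ← Finset.sum_smul,
        S_vanish hu0 hqu M hM1, zero_smul]
    · apply Finset.sum_eq_zero
      intro k _
      rw [map_smul, ir_mon_ne ir hβii hir1 hirθ hirm hli hlj, smul_zero]
  · -- ri part
    by_cases hli : l = i
    · rw [hli]
      have hterm : ∀ k ∈ Finset.range (M + 1),
          ri i (((-1:𝔽)^k * (b⁻¹)^k * ((qfact u k)⁻¹ * (qfact u (M-k))⁻¹)) •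
              ((θ 𝔽 i)^k * θ 𝔽 j * (θ 𝔽 i)^(M-k)))
          = (((-1:𝔽)^k * (b⁻¹)^k * ((qfact u k)⁻¹ * (qfact u (M-k))⁻¹)) *
              (v ^ (-(cd.c i j + ((M - k : ℕ) : ℤ) * cd.c i i)) * b * Qs cd v i k)) •
              ((θ 𝔽 i)^(k-1) * θ 𝔽 j * (θ 𝔽 i)^(M-k))
            + (((-1:𝔽)^k * (b⁻¹)^k * ((qfact u k)⁻¹ * (qfact u (M-k))⁻¹)) *
              Qs cd v i (M-k)) • ((θ 𝔽 i)^k * θ 𝔽 j * (θ 𝔽 i)^(M-k-1)) := by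
        intro k hk
        rw [map_smul, ri_mon_i ri hβii hri1 hriθ hrim hij, ← hb, smul_add, smul_smul, smul_smul]
      rw [Finset.sum_congr rfl hterm, Finset.sum_add_distrib, Finset.sum_range_succ',
        Finset.sum_range_succ]
      simp only [Qs_zero, mul_zero, zero_smul, add_zero, Nat.sub_self]
      rw [← Finset.sum_add_distrib]
      apply Finset.sum_eq_zero
      intro k hk
      have hkM : k < M := Finset.mem_range.mp hk
      have e1 : M - (k + 1) = M - k - 1 := by omega
      set m' : ℕ := M - k - 1 with hm'
      have e2 : M - k = m' + 1 := by omega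
      have e3 : k + 1 - 1 = k := rfl
      rw [e1, e2, e3]
      rw [← add_smul]
      apply smul_eq_zero_of_left
      have hMk : (M : ℤ) = (k : ℤ) + (m' : ℤ) + 1 := by omega
      have hvp : v ^ (-(cd.c i j + ((m' : ℕ) : ℤ) * cd.c i i)) = u ^ ((k:ℤ) - (m':ℤ)) := by
        rw [hcij, two_d cd i, hu, ← zpow_mul]
        congr 1
        rw [hMk]
        ring
      rw [hQn (k+1), hQn (m'+1), qfact_succ, qfact_succ, hvp]
      have hq1 : qnum u (k+1) ≠ 0 := hqu _ (by omega)
      have hq2 : qnum u (m'+1) ≠ 0 := hqu _ (by omega)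
      have hf1 : qfact u k ≠ 0 := hqf k
      have hf2 : qfact u m' ≠ 0 := hqf m'
      have e1 : qnum u (k+1) * (qnum u (k+1))⁻¹ = 1 := mul_inv_cancel₀ hq1
      have e2 : qnum u (m'+1) * (qnum u (m'+1))⁻¹ = 1 := mul_inv_cancel₀ hq2
      have h3 : b * b⁻¹ = 1 := mul_inv_cancel₀ hb0
      have hz1 : (u ^ ((k:ℤ) - (m':ℤ)) * u ^ (1 - ((k+1 : ℕ) : ℤ))) = u ^ (-(m':ℤ)) := by
        rw [← zpow_add₀ hu0]; congr 1; push_cast; ring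
      have hz2 : u ^ (1 - ((m'+1 : ℕ) : ℤ)) = u ^ (-(m':ℤ)) := by congr 1; push_cast; ring
      linear_combination (-((-1:𝔽)^k * (b⁻¹)^k * (qfact u k)⁻¹ * (qfact u m')⁻¹) * (u ^ ((k:ℤ) - (m':ℤ)) * u ^ (1 - ((k+1 : ℕ) : ℤ))) * (qnum u (k+1) * (qnum u (k+1))⁻¹)) * h3
        + (-((-1:𝔽)^k * (b⁻¹)^k * (qfact u k)⁻¹ * (qfact u m')⁻¹) * (qnum u (k+1) * (qnum u (k+1))⁻¹)) * hz1
        + (-((-1:𝔽)^k * (b⁻¹)^k * (qfact u k)⁻¹ * (qfact u m')⁻¹) * u ^ (-(m':ℤ))) * e1 + (((-1:𝔽)^k * (b⁻¹)^k * (qfact u k)⁻¹ * (qfact u m')⁻¹) * u ^ (1 - ((m'+1 : ℕ) : ℤ))) * e2 + ((-1:𝔽)^k * (b⁻¹)^k * (qfact u k)⁻¹ * (qfact u m')⁻¹) * hz2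
    by_cases hlj : l = j
    · rw [hlj]
      have hterm : ∀ k ∈ Finset.range (M + 1),
          ri j (((-1:𝔽)^k * (b⁻¹)^k * ((qfact u k)⁻¹ * (qfact u (M-k))⁻¹)) •
              ((θ 𝔽 i)^k * θ 𝔽 j * (θ 𝔽 i)^(M-k)))
          = ((b⁻¹)^M * u ^ ((M:ℤ) * ((M:ℤ)-1))) •
              (((-1:𝔽)^k * u ^ (-((k:ℤ) * ((M:ℤ)-1))) * (qfact u k * qfact u (M-k))⁻¹) •
              (θ 𝔽 i) ^ M) := by
        intro k hk
        have hkM : k ≤ M := by simp at hk; omega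
        rw [map_smul, ri_mon_j ri hβii hri1 hriθ hrim hij, hbji]
        rw [smul_smul, smul_smul, show k + (M - k) = M by omega]
        congr 1
        have hvc : v ^ (-(((M - k : ℕ):ℤ) * cd.c j i))
            = u ^ ((M:ℤ) * ((M:ℤ) - 1)) * u ^ (-((k:ℤ) * ((M:ℤ) - 1))) := by
          rw [hcji, hcij, hu, ← zpow_add₀ (zpow_ne_zero _ hv0), ← zpow_mul]
          congr 1
          have hcast : ((M - k : ℕ) : ℤ) = (M:ℤ) - k := by omega
          rw [hcast]
          ring
        rw [hvc]
        have hbM : (b⁻¹)^k * (b⁻¹)^(M-k) = (b⁻¹)^M := by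
          rw [← pow_add]
          congr 1
          omega
        linear_combination ((-1:𝔽)^k * ((qfact u k)⁻¹ * (qfact u (M-k))⁻¹) *
          (u ^ ((M:ℤ) * ((M:ℤ)-1)) * u ^ (-((k:ℤ) * ((M:ℤ)-1))))) * hbM
      rw [Finset.sum_congr rfl hterm, ← Finset.smul_sum, ← Finset.sum_smul,
        S_vanish_neg hu0 hqu M hM1, zero_smul, smul_zero]
    · apply Finset.sum_eq_zero
      intro k _
      rw [map_smul, ri_mon_ne ri hβii hri1 hriθ hrim hli hlj, smul_zero]
end
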